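/- arXiv:2406.19625 — 6 statements merged into one kernel-verified Lean document; each statement's English description precedes it below -/
import Mathlib

section
/- Let C be a triangulated category and D a functorially finite rigid subcategory (i.e., Hom(D, D[1]) = 0). Then the pair ((D, D[-1]^⊥), (^⊥D[1], D)) is a twin cotorsion pair: both pairs are cotorsion pairs and D ⊆ ^⊥D[1]; moreover it is concentric, i.e., D ∩ D[-1]^⊥ = ^⊥D[1] ∩ D = D. -/
/-!
STATEMENT 0: In a triangulated category `C`, if `D` is a functorially finite rigid
subcategory, then `((D, D[-1]^⊥), (^⊥D[1], D))` is a concentric twin cotorsion pair.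
-/

open CategoryTheory CategoryTheory.Limits CategoryTheory.Pretriangulated

universe v u

namespace Stmt0

variable (C : Type u) [Category.{v} C] [Preadditive C] [HasZeroObject C] [HasShift C ℤ]
  [∀ n : ℤ, (shiftFunctor C n).Additive] [Pretriangulated C]

variable {C}

/-- A collection of objects is closed under direct summands (hence under isomorphisms). -/
def ClosedSummands (D : Set C) : Prop :=
  ∀ ⦃X Y : C⦄, X ∈ D → ∀ (i : Y ⟶ X) (p : X ⟶ Y), i ≫ p = 𝟙 Y → Y ∈ D

/-- `D` is rigid: `Hom(D, D[1]) = 0`. -/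
def Rigid (D : Set C) : Prop :=
  ∀ ⦃d d' : C⦄, d ∈ D → d' ∈ D → ∀ f : d ⟶ d'⟦(1 : ℤ)⟧, f = 0

/-- `f : d ⟶ X` is a right `D`-approximation of `X`. -/
def RightApprox (D : Set C) {d X : C} (f : d ⟶ X) : Prop :=
  ∀ ⦃d' : C⦄, d' ∈ D → ∀ g : d' ⟶ X, ∃ h : d' ⟶ d, h ≫ f = g

/-- `f : X ⟶ d` is a left `D`-approximation of `X`. -/
def LeftApprox (D : Set C) {X d : C} (f : X ⟶ d) : Prop :=
  ∀ ⦃d' : C⦄, d' ∈ D → ∀ g : X ⟶ d', ∃ h : d ⟶ d', f ≫ h = g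

/-- `D` is functorially finite: every object admits a right and a left `D`-approximation. -/
def FunctoriallyFinite (D : Set C) : Prop :=
  (∀ X : C, ∃ d ∈ D, ∃ f : d ⟶ X, RightApprox D f) ∧
  (∀ X : C, ∃ d ∈ D, ∃ f : X ⟶ d, LeftApprox D f)

/-- `(U, V)` is a cotorsion pair: both classes are closed under direct summands,
`Hom(U, V[1]) = 0`, every object `X` sits in a triangle `V' ⟶ U' ⟶ X ⟶ V'[1]`
(i.e. `X ∈ Cone(V, U)`), and in a triangle `X ⟶ V' ⟶ U' ⟶ X[1]` (i.e. `X ∈ CoCone(V, U)`). -/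
def CotorsionPair (U V : Set C) : Prop :=
  ClosedSummands U ∧ ClosedSummands V ∧
  (∀ ⦃u v : C⦄, u ∈ U → v ∈ V → ∀ f : u ⟶ v⟦(1 : ℤ)⟧, f = 0) ∧
  (∀ X : C, ∃ v ∈ V, ∃ u ∈ U, ∃ (a : v ⟶ u) (b : u ⟶ X) (c : X ⟶ v⟦(1 : ℤ)⟧),
      Triangle.mk a b c ∈ distTriang C) ∧
  (∀ X : C, ∃ v ∈ V, ∃ u ∈ U, ∃ (a : X ⟶ v) (b : v ⟶ u) (c : u ⟶ X⟦(1 : ℤ)⟧),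
      Triangle.mk a b c ∈ distTriang C)

/-- `D[-1]^⊥ = {X : Hom(D[-1], X) = 0}`. -/
def perpOfShiftNegOne (D : Set C) : Set C :=
  {X | ∀ ⦃d : C⦄, d ∈ D → ∀ f : d⟦(-1 : ℤ)⟧ ⟶ X, f = 0}

/-- `^⊥(D[1]) = {X : Hom(X, D[1]) = 0}`. -/
def leftPerpOfShiftOne (D : Set C) : Set C :=
  {X | ∀ ⦃d : C⦄, d ∈ D → ∀ f : X ⟶ d⟦(1 : ℤ)⟧, f = 0}


section Aux

noncomputable section

/-- Transfer a distinguished triangle `v ⟶ u ⟶ X⟦1⟧ ⟶ v⟦1⟧` to one of the form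
`X ⟶ v ⟶ u ⟶ X⟦1⟧`. -/
lemma triangle_of_shift (X v u : C) (a : v ⟶ u) (b : u ⟶ X⟦(1 : ℤ)⟧)
    (c : X⟦(1 : ℤ)⟧ ⟶ v⟦(1 : ℤ)⟧) (hT : Triangle.mk a b c ∈ distTriang C) :
    ∃ (a' : X ⟶ v) (b' : v ⟶ u) (c' : u ⟶ X⟦(1 : ℤ)⟧),
      Triangle.mk a' b' c' ∈ distTriang C := by
  have hinv := inv_rot_of_distTriang _ hT
  set T := Triangle.mk a b c with hTdef
  set e := (shiftEquiv C (1 : ℤ)).unitIso.app X with hedef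
  refine ⟨e.hom ≫ T.invRotate.mor₁, a, T.invRotate.mor₃ ≫ (e.inv)⟦(1 : ℤ)⟧', ?_⟩
  refine isomorphic_distinguished _ hinv _ ?_
  refine Triangle.isoMk _ _ e (Iso.refl v) (Iso.refl u) ?_ ?_ ?_
  · simp [T]
    exact Category.comp_id _
  · simp [T]
    exact (Category.comp_id _).trans (Category.id_comp _).symm
  · dsimp [T]
    simp [← Functor.map_comp]
    exact (Category.assoc _ _ _).trans ((whisker_eq _ ((shiftFunctor C (1 : ℤ)).mapIso e).inv_hom_id).trans
      ((Category.comp_id _).trans (Category.id_comp _).symm))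

/-- Transfer a distinguished triangle `X⟦-1⟧ ⟶ v ⟶ u ⟶ X⟦-1⟧⟦1⟧` to one of the form
`v ⟶ u ⟶ X ⟶ v⟦1⟧`. -/
lemma triangle_of_unshift (X v u : C) (a : X⟦(-1 : ℤ)⟧ ⟶ v) (b : v ⟶ u)
    (c : u ⟶ (X⟦(-1 : ℤ)⟧)⟦(1 : ℤ)⟧)
    (hT : Triangle.mk a b c ∈ distTriang C) :
    ∃ (b' : v ⟶ u) (c' : u ⟶ X) (a' : X ⟶ v⟦(1 : ℤ)⟧),
      Triangle.mk b' c' a' ∈ distTriang C := by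
  have hrot := rot_of_distTriang _ hT
  set T := Triangle.mk a b c with hTdef
  set e := (shiftEquiv C (1 : ℤ)).counitIso.app X with hedef
  refine ⟨b, T.rotate.mor₂ ≫ e.hom, e.inv ≫ T.rotate.mor₃, ?_⟩
  refine isomorphic_distinguished _ hrot _ ?_
  refine Triangle.isoMk _ _ (Iso.refl v) (Iso.refl u) e.symm ?_ ?_ ?_
  · simp [T]
    exact (Category.comp_id _).trans (Category.id_comp _).symm
  · simp [T]
    exact (Category.assoc _ _ _).trans ((whisker_eq _ e.hom_inv_id).trans
      ((Category.comp_id _).trans (Category.id_comp _).symm))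
  · dsimp [T]
    simp
    exact (whisker_eq _ (CategoryTheory.Functor.map_id _ _)).trans (Category.comp_id _)

lemma hom_zero_of_shift_neg {u v : C} (h : ∀ g : u⟦(-1 : ℤ)⟧ ⟶ v, g = 0)
    (f : u ⟶ v⟦(1 : ℤ)⟧) : f = 0 := by
  have h1 : f⟦(-1 : ℤ)⟧' ≫ (shiftEquiv C (1 : ℤ)).unitIso.inv.app v = 0 := h _
  have h2 : f⟦(-1 : ℤ)⟧' = 0 := by
    have := h1 =≫ (shiftEquiv C (1 : ℤ)).unitIso.hom.app v
    exact (Category.comp_id _).symm.trans ((whisker_eq _ (Iso.inv_hom_id_app (shiftEquiv C (1 : ℤ)).unitIso v).symm).trans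
      ((Category.assoc _ _ _).symm.trans (this.trans zero_comp)))
  exact (shiftFunctor C (-1 : ℤ)).map_injective (by rw [Functor.map_zero]; exact h2)

lemma shift_neg_hom_zero {d d' : C} (h : ∀ f : d ⟶ d'⟦(1 : ℤ)⟧, f = 0)
    (m : d⟦(-1 : ℤ)⟧ ⟶ d') : m = 0 := by
  have h1 : (shiftEquiv C (1 : ℤ)).counitIso.inv.app d ≫ m⟦(1 : ℤ)⟧' = 0 := h _
  have h2 : m⟦(1 : ℤ)⟧' = 0 := by
    have := (shiftEquiv C (1 : ℤ)).counitIso.hom.app d ≫= h1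
    exact (Category.id_comp _).symm.trans ((eq_whisker (Iso.hom_inv_id_app (shiftEquiv C (1 : ℤ)).counitIso d).symm _).trans
      ((Category.assoc _ _ _).trans (this.trans comp_zero)))
  exact (shiftFunctor C (1 : ℤ)).map_injective (by rw [Functor.map_zero]; exact h2)

end

end Aux

/-- If `D` is a functorially finite rigid subcategory of a triangulated
category `C`, then `((D, D[-1]^⊥), (^⊥(D[1]), D))` is a twin cotorsion pair which is
concentric: `D ∩ D[-1]^⊥ = ^⊥(D[1]) ∩ D = D`. -/
theorem statement0 (D : Set C) (hsum : ClosedSummands D) (hrig : Rigid D)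
    (hff : FunctoriallyFinite D) :
    CotorsionPair D (perpOfShiftNegOne D) ∧
    CotorsionPair (leftPerpOfShiftOne D) D ∧
    D ⊆ leftPerpOfShiftOne D ∧
    D ∩ perpOfShiftNegOne D = D ∧
    leftPerpOfShiftOne D ∩ D = D := by
  obtain ⟨hra, hla⟩ := hff
  have hDL : D ⊆ leftPerpOfShiftOne D := fun d hd d' hd' f => hrig hd hd' f
  have hDP : D ⊆ perpOfShiftNegOne D := fun d' hd' d hd m =>
    shift_neg_hom_zero (fun f => hrig hd hd' f) m
  have hsumP : ClosedSummands (perpOfShiftNegOne D) := by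
    intro X Y hX i p hip d hd f
    have h0 : f ≫ i = 0 := hX hd _
    calc f = (f ≫ i) ≫ p := by rw [Category.assoc, hip, Category.comp_id]
    _ = 0 := by rw [h0, zero_comp]
  have hsumL : ClosedSummands (leftPerpOfShiftOne D) := by
    intro X Y hX i p hip d hd f
    have h0 : p ≫ f = 0 := hX hd _
    calc f = i ≫ p ≫ f := by rw [← Category.assoc, hip, Category.id_comp]
    _ = 0 := by rw [h0, comp_zero]
  have key1 : ∀ X : C, ∃ v ∈ perpOfShiftNegOne D, ∃ u ∈ D,
      ∃ (a : v ⟶ u) (b : u ⟶ X) (c : X ⟶ v⟦(1 : ℤ)⟧),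
        Triangle.mk a b c ∈ distTriang C := by
    intro X
    obtain ⟨d, hd, f, hf⟩ := hra X
    obtain ⟨Y, g, h, hT⟩ := distinguished_cocone_triangle f
    have hinv := inv_rot_of_distTriang _ hT
    refine ⟨Y⟦(-1 : ℤ)⟧, ?_, d, hd, (Triangle.mk f g h).invRotate.mor₁,
      (Triangle.mk f g h).invRotate.mor₂, (Triangle.mk f g h).invRotate.mor₃, hinv⟩
    intro d' hd' m
    obtain ⟨m', rfl⟩ := (shiftFunctor C (-1 : ℤ)).map_surjective m
    have hh : m' ≫ (Triangle.mk f g h).mor₃ = 0 := hrig hd' hd _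
    obtain ⟨k, hk⟩ := Triangle.coyoneda_exact₃ _ hT m' hh
    obtain ⟨l, hl⟩ := hf hd' k
    have hm' : m' = 0 := by
      rw [hk, ← hl]
      exact (Category.assoc _ _ _).trans ((whisker_eq _ (comp_distTriang_mor_zero₁₂ _ hT)).trans comp_zero)
    rw [hm', Functor.map_zero]
  have key1' : ∀ X : C, ∃ v ∈ perpOfShiftNegOne D, ∃ u ∈ D,
      ∃ (a : X ⟶ v) (b : v ⟶ u) (c : u ⟶ X⟦(1 : ℤ)⟧),
        Triangle.mk a b c ∈ distTriang C := by
    intro X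
    obtain ⟨v, hv, u, hu, a, b, c, hT⟩ := key1 (X⟦(1 : ℤ)⟧)
    obtain ⟨a', b', c', hT'⟩ := triangle_of_shift X v u a b c hT
    exact ⟨v, hv, u, hu, a', b', c', hT'⟩
  have key2 : ∀ X : C, ∃ v ∈ D, ∃ u ∈ leftPerpOfShiftOne D,
      ∃ (a : X ⟶ v) (b : v ⟶ u) (c : u ⟶ X⟦(1 : ℤ)⟧),
        Triangle.mk a b c ∈ distTriang C := by
    intro X
    obtain ⟨d, hd, f, hf⟩ := hla X
    obtain ⟨Y, g, h, hT⟩ := distinguished_cocone_triangle f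
    refine ⟨d, hd, Y, ?_, f, g, h, hT⟩
    intro d' hd' m
    have hgm : (Triangle.mk f g h).mor₂ ≫ m = 0 := hrig hd hd' _
    obtain ⟨n, hn⟩ := Triangle.yoneda_exact₃ _ hT m hgm
    obtain ⟨n', rfl⟩ := (shiftFunctor C (1 : ℤ)).map_surjective n
    obtain ⟨k, hk⟩ := hf hd' n'
    rw [hn, ← hk]
    exact (whisker_eq _ (Functor.map_comp _ _ _)).trans ((Category.assoc _ _ _).symm.trans
      ((eq_whisker (comp_distTriang_mor_zero₃₁ _ hT) _).trans zero_comp))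
  have key2' : ∀ X : C, ∃ v ∈ D, ∃ u ∈ leftPerpOfShiftOne D,
      ∃ (a : v ⟶ u) (b : u ⟶ X) (c : X ⟶ v⟦(1 : ℤ)⟧),
        Triangle.mk a b c ∈ distTriang C := by
    intro X
    obtain ⟨v, hv, u, hu, a, b, c, hT⟩ := key2 (X⟦(-1 : ℤ)⟧)
    obtain ⟨b', c', a', hT'⟩ := triangle_of_unshift X v u a b c hT
    exact ⟨v, hv, u, hu, b', c', a', hT'⟩
  refine ⟨⟨hsum, hsumP, ?_, key1, key1'⟩,
    ⟨hsumL, hsum, fun u v hu hv f => hu hv f, key2', key2⟩,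
    hDL, Set.inter_eq_left.mpr hDP, Set.inter_eq_right.mpr hDL⟩
  intro u v hu hv f
  exact hom_zero_of_shift_neg (fun g => hv hu g) f


end Stmt0
end

section
/- Let C be a triangulated category, D a functorially finite rigid subcategory, and X an object with Hom(D[-1], X) = 0 (equivalently X ∈ D[-1]^⊥). Complete a left D-approximation i : X → D_X to a triangle X → D_X → X⟨1⟩ → X[1]. Then X⟨1⟩ ∈ ^⊥(D[1]), and the assignment X ↦ X⟨1⟩ induces an equivalence of additive quotient categories ⟨1⟩ : D[-1]^⊥/[D] → ^⊥(D[1])/[D], where [D] denotes the ideal of morphisms factoring through D. -/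
/-!
STATEMENT 1: For a functorially finite rigid subcategory `D` of a triangulated category,
the cone of a left `D`-approximation of `X ∈ D[-1]^⊥` lies in `^⊥(D[1])`, and `X ↦ X⟨1⟩`
induces an equivalence `D[-1]^⊥/[D] ≃ ^⊥(D[1])/[D]`.
-/

open CategoryTheory CategoryTheory.Limits CategoryTheory.Pretriangulated

universe v u

namespace Stmt1

variable {C : Type u} [Category.{v} C] [Preadditive C] [HasZeroObject C] [HasShift C ℤ]
  [∀ n : ℤ, (shiftFunctor C n).Additive] [Pretriangulated C]

def ClosedSummands (D : Set C) : Prop :=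
  ∀ ⦃X Y : C⦄, X ∈ D → ∀ (i : Y ⟶ X) (p : X ⟶ Y), i ≫ p = 𝟙 Y → Y ∈ D

def Rigid (D : Set C) : Prop :=
  ∀ ⦃d d' : C⦄, d ∈ D → d' ∈ D → ∀ f : d ⟶ d'⟦(1 : ℤ)⟧, f = 0

def RightApprox (D : Set C) {d X : C} (f : d ⟶ X) : Prop :=
  ∀ ⦃d' : C⦄, d' ∈ D → ∀ g : d' ⟶ X, ∃ h : d' ⟶ d, h ≫ f = g

def LeftApprox (D : Set C) {X d : C} (f : X ⟶ d) : Prop :=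
  ∀ ⦃d' : C⦄, d' ∈ D → ∀ g : X ⟶ d', ∃ h : d ⟶ d', f ≫ h = g

def FunctoriallyFinite (D : Set C) : Prop :=
  (∀ X : C, ∃ d ∈ D, ∃ f : d ⟶ X, RightApprox D f) ∧
  (∀ X : C, ∃ d ∈ D, ∃ f : X ⟶ d, LeftApprox D f)

def perpOfShiftNegOne (D : Set C) : Set C :=
  {X | ∀ ⦃d : C⦄, d ∈ D → ∀ f : d⟦(-1 : ℤ)⟧ ⟶ X, f = 0}

def leftPerpOfShiftOne (D : Set C) : Set C :=
  {X | ∀ ⦃d : C⦄, d ∈ D → ∀ f : X ⟶ d⟦(1 : ℤ)⟧, f = 0}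

/-- `f` factors through an object of `I`. -/
def FactorsThru (I : Set C) {X Y : C} (f : X ⟶ Y) : Prop :=
  ∃ (W : C) (_ : W ∈ I) (p : X ⟶ W) (q : W ⟶ Y), f = p ≫ q

/-- The relation on a full subcategory identifying morphisms whose difference factors
through an object of `I`; the quotient is the additive quotient by the ideal `[I]`. -/
def idealRel (I Z : Set C) : HomRel (ObjectProperty.FullSubcategory (· ∈ Z)) :=
  fun {X Y} f g => FactorsThru I ((f.hom : X.obj ⟶ Y.obj) - (g.hom : X.obj ⟶ Y.obj))

/-- The additive quotient `Z/[I]`. -/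
abbrev IdealQuotient (I Z : Set C) := CategoryTheory.Quotient (idealRel I Z)

section Aux

open ZeroObject

variable (D : Set C)

lemma zero_mem (hsum : ClosedSummands D) (hff : FunctoriallyFinite D) : (0 : C) ∈ D := by
  obtain ⟨d, hd, f, -⟩ := hff.2 (0 : C)
  exact hsum hd 0 0 ((isZero_zero C).eq_of_src _ _)

lemma biprod_mem (hsum : ClosedSummands D) (hff : FunctoriallyFinite D)
    {d₁ d₂ : C} (h₁ : d₁ ∈ D) (h₂ : d₂ ∈ D) : (d₁ ⊞ d₂) ∈ D := by
  obtain ⟨e, he, j, hj⟩ := hff.2 (d₁ ⊞ d₂)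
  obtain ⟨r₁, hr₁⟩ := hj h₁ biprod.fst
  obtain ⟨r₂, hr₂⟩ := hj h₂ biprod.snd
  refine hsum he j (r₁ ≫ biprod.inl + r₂ ≫ biprod.inr) ?_
  rw [Preadditive.comp_add, ← Category.assoc, ← Category.assoc, hr₁, hr₂, biprod.total]

lemma factorsThru_zero (hD0 : (0 : C) ∈ D) {X Y : C} : FactorsThru D (0 : X ⟶ Y) :=
  ⟨0, hD0, 0, 0, by simp⟩

lemma factorsThru_neg {X Y : C} {f : X ⟶ Y} (hf : FactorsThru D f) : FactorsThru D (-f) := by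
  obtain ⟨e, he, a, b, rfl⟩ := hf
  exact ⟨e, he, -a, b, by simp⟩

lemma factorsThru_add (hsum : ClosedSummands D) (hff : FunctoriallyFinite D)
    {X Y : C} {f g : X ⟶ Y} (hf : FactorsThru D f) (hg : FactorsThru D g) :
    FactorsThru D (f + g) := by
  obtain ⟨e₁, he₁, a₁, b₁, rfl⟩ := hf
  obtain ⟨e₂, he₂, a₂, b₂, rfl⟩ := hg
  exact ⟨e₁ ⊞ e₂, biprod_mem D hsum hff he₁ he₂, biprod.lift a₁ a₂, biprod.desc b₁ b₂, by simp⟩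

lemma factorsThru_precomp {X Y Z : C} {f : Y ⟶ Z} (hf : FactorsThru D f) (g : X ⟶ Y) :
    FactorsThru D (g ≫ f) := by
  obtain ⟨e, he, a, b, rfl⟩ := hf
  exact ⟨e, he, g ≫ a, b, by simp⟩

lemma factorsThru_postcomp {X Y Z : C} {f : X ⟶ Y} (hf : FactorsThru D f) (g : Y ⟶ Z) :
    FactorsThru D (f ≫ g) := by
  obtain ⟨e, he, a, b, rfl⟩ := hf
  exact ⟨e, he, a, b ≫ g, by simp⟩

lemma congruence_idealRel (hsum : ClosedSummands D) (hff : FunctoriallyFinite D) (Z : Set C) :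
    Congruence (idealRel D Z) := by
  have hD0 := zero_mem D hsum hff
  refine @Congruence.mk _ _ _ ⟨fun {X Y Z} f {g g'} hg => ?_⟩ ⟨fun {X Y Z} {f f'} g hf => ?_⟩
    (fun {X Y} => ?_)
  rotate_left 2
  · constructor
    · intro f
      show FactorsThru D _
      simpa only [sub_self] using factorsThru_zero D hD0 (X := X.obj) (Y := Y.obj)
    · intro f g hfg
      show FactorsThru D _
      simpa only [neg_sub] using factorsThru_neg D hfg
    · intro f g h h₁ h₂
      show FactorsThru D _
      simpa only [sub_add_sub_cancel] using factorsThru_add D hsum hff h₁ h₂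
  · show FactorsThru D _
    simpa only [Preadditive.comp_sub, ObjectProperty.FullSubcategory.comp_hom] using factorsThru_precomp D hg f.hom
  · show FactorsThru D _
    simpa only [Preadditive.sub_comp, ObjectProperty.FullSubcategory.comp_hom] using factorsThru_postcomp D hf g.hom

lemma hom_zero_of_all_shift_zero {A B : C} (f : A⟦(-1 : ℤ)⟧ ⟶ B)
    (h : ∀ g : A ⟶ B⟦(1 : ℤ)⟧, g = 0) : f = 0 := by
  apply (shiftFunctor C (1 : ℤ)).map_injective
  rw [Functor.map_zero]
  have h1 := h ((shiftFunctorCompIsoId C (-1 : ℤ) (1 : ℤ) (by ring)).inv.app A ≫ f⟦(1 : ℤ)⟧')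
  rw [← cancel_epi ((shiftFunctorCompIsoId C (-1 : ℤ) (1 : ℤ) (by ring)).inv.app A)]
  simpa using h1

lemma hom_zero_of_all_neg_shift_zero {A B : C} (f : A ⟶ B⟦(1 : ℤ)⟧)
    (h : ∀ g : A⟦(-1 : ℤ)⟧ ⟶ B, g = 0) : f = 0 := by
  apply (shiftFunctor C (-1 : ℤ)).map_injective
  rw [Functor.map_zero]
  have h1 := h (f⟦(-1 : ℤ)⟧' ≫ (shiftFunctorCompIsoId C (1 : ℤ) (-1 : ℤ) (by ring)).hom.app B)
  rw [← cancel_mono ((shiftFunctorCompIsoId C (1 : ℤ) (-1 : ℤ) (by ring)).hom.app B)]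
  simpa using h1

lemma perp_hom_zero {Y d : C} (hY : Y ∈ perpOfShiftNegOne D) (hd : d ∈ D)
    (f : d ⟶ Y⟦(1 : ℤ)⟧) : f = 0 :=
  hom_zero_of_all_neg_shift_zero f (fun g => hY hd g)

lemma leftPerp_hom_zero {W d : C} (hW : W ∈ leftPerpOfShiftOne D) (hd : d ∈ D)
    (f : W⟦(-1 : ℤ)⟧ ⟶ d) : f = 0 :=
  hom_zero_of_all_shift_zero f (fun g => hW hd g)

lemma rigid_hom_zero (hrig : Rigid D) {e d : C} (he : e ∈ D) (hd : d ∈ D)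
    (f : e⟦(-1 : ℤ)⟧ ⟶ d) : f = 0 :=
  hom_zero_of_all_shift_zero f (fun g => hrig he hd g)

/-- The data of a left `D`-approximation triangle of `X`. -/
structure ApproxTri (X : C) where
  DX : C
  hDX : DX ∈ D
  i : X ⟶ DX
  hi : LeftApprox D i
  W : C
  p : DX ⟶ W
  h : W ⟶ X⟦(1 : ℤ)⟧
  hT : Triangle.mk i p h ∈ distTriang C

lemma approxTri_nonempty (hff : FunctoriallyFinite D) (X : C) :
    Nonempty (ApproxTri D X) := by
  obtain ⟨d, hd, i, hi⟩ := hff.2 X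
  obtain ⟨W, p, h, hT⟩ := Pretriangulated.distinguished_cocone_triangle i
  exact ⟨⟨d, hd, i, hi, W, p, h, hT⟩⟩

lemma cone_mem_leftPerp (hrig : Rigid D) {X : C} (T : ApproxTri D X) :
    T.W ∈ leftPerpOfShiftOne D := by
  intro d hd f
  have h1 : (Triangle.mk T.i T.p T.h).mor₂ ≫ f = 0 := hrig T.hDX hd _
  obtain ⟨g, hg⟩ := Triangle.yoneda_exact₃ _ T.hT f h1
  obtain ⟨g', rfl⟩ := (shiftFunctor C (1 : ℤ)).map_surjective g
  obtain ⟨k, hk⟩ := T.hi hd g'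
  have h2 : T.h ≫ T.i⟦(1 : ℤ)⟧' = 0 := comp_distTriang_mor_zero₃₁ _ T.hT
  rw [hg, ← hk]
  show T.h ≫ (T.i ≫ k)⟦(1 : ℤ)⟧' = 0
  rw [Functor.map_comp, ← Category.assoc, h2, zero_comp]

lemma exists_w {X Y : C} (TX : ApproxTri D X) (TY : ApproxTri D Y) (u : X ⟶ Y) :
    ∃ w : TX.W ⟶ TY.W, TX.h ≫ u⟦(1 : ℤ)⟧' = w ≫ TY.h := by
  obtain ⟨v, hv⟩ := TX.hi TY.hDX (u ≫ TY.i)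
  obtain ⟨w, -, hw₂⟩ :=
    complete_distinguished_triangle_morphism _ _ TX.hT TY.hT u v hv
  exact ⟨w, hw₂⟩

lemma factorsThru_of_comp_h_eq_zero {Y Z : C} (TY : ApproxTri D Y) (w : Z ⟶ TY.W)
    (hw : w ≫ TY.h = 0) : FactorsThru D w := by
  obtain ⟨g, hg⟩ := Triangle.coyoneda_exact₃ _ TY.hT w hw
  exact ⟨TY.DX, TY.hDX, g, TY.p, hg⟩

lemma spec_rel {X Y : C} (TX : ApproxTri D X) (TY : ApproxTri D Y)
    {u u' : X ⟶ Y} {w w' : TX.W ⟶ TY.W}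
    (hw : TX.h ≫ u⟦(1 : ℤ)⟧' = w ≫ TY.h) (hw' : TX.h ≫ u'⟦(1 : ℤ)⟧' = w' ≫ TY.h)
    (huu : FactorsThru D (u - u')) : FactorsThru D (w - w') := by
  obtain ⟨e, he, a, b, hab⟩ := huu
  obtain ⟨a', ha'⟩ := TX.hi he a
  have hz : TX.h ≫ TX.i⟦(1 : ℤ)⟧' = 0 := comp_distTriang_mor_zero₃₁ _ TX.hT
  have h1 : (w - w') ≫ TY.h = 0 := by
    have e1 : (w - w') ≫ TY.h = TX.h ≫ ((u - u')⟦(1 : ℤ)⟧') := by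
      rw [Preadditive.sub_comp, Functor.map_sub, Preadditive.comp_sub, hw, hw']
    rw [e1, hab, ← ha', Category.assoc, Functor.map_comp, Functor.map_comp,
      reassoc_of% hz, zero_comp]
  exact factorsThru_of_comp_h_eq_zero D TY _ h1

lemma factorsThru_u {X Y : C} (TX : ApproxTri D X) (TY : ApproxTri D Y)
    (hY : Y ∈ perpOfShiftNegOne D) {u : X ⟶ Y} {w : TX.W ⟶ TY.W}
    (hspec : TX.h ≫ u⟦(1 : ℤ)⟧' = w ≫ TY.h) (hw : FactorsThru D w) : FactorsThru D u := by
  obtain ⟨d, hd, a, b, hab⟩ := hw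
  have hb : b ≫ TY.h = 0 := perp_hom_zero D hY hd _
  have h0 : TX.h ≫ u⟦(1 : ℤ)⟧' = 0 := by
    rw [hspec, hab, Category.assoc, hb, comp_zero]
  obtain ⟨g, hg⟩ := Triangle.yoneda_exact₂ _
    (rot_of_distTriang _ (rot_of_distTriang _ TX.hT)) (u⟦(1 : ℤ)⟧') h0
  obtain ⟨g', rfl⟩ := (shiftFunctor C (1 : ℤ)).map_surjective (X := TX.DX) (Y := Y) g
  refine ⟨TX.DX, TX.hDX, TX.i, -g', ?_⟩
  apply (shiftFunctor C (1 : ℤ)).map_injective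
  erw [hg]
  show _ = (TX.i ≫ (-g'))⟦(1 : ℤ)⟧'
  rw [Functor.map_comp, Functor.map_neg]
  simp
  exact Preadditive.neg_comp _ _

lemma exists_u {X Y : C} (TX : ApproxTri D X) (TY : ApproxTri D Y)
    (hY : Y ∈ perpOfShiftNegOne D) (w : TX.W ⟶ TY.W) :
    ∃ u : X ⟶ Y, TX.h ≫ u⟦(1 : ℤ)⟧' = w ≫ TY.h := by
  have h0 : (Triangle.mk TX.i TX.p TX.h).mor₂ ≫ (w ≫ TY.h) = 0 :=
    perp_hom_zero D hY TX.hDX _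
  obtain ⟨g, hg⟩ := Triangle.yoneda_exact₃ _ TX.hT (w ≫ TY.h) h0
  obtain ⟨u, rfl⟩ := (shiftFunctor C (1 : ℤ)).map_surjective g
  exact ⟨u, hg.symm⟩

lemma exists_preimage (hrig : Rigid D) (hff : FunctoriallyFinite D) {W' : C}
    (hW' : W' ∈ leftPerpOfShiftOne D) :
    ∃ (X1 : C) (_ : X1 ∈ perpOfShiftNegOne D) (d : C) (_ : d ∈ D) (j : X1 ⟶ d)
      (_ : LeftApprox D j) (p' : d ⟶ W') (h' : W' ⟶ X1⟦(1 : ℤ)⟧),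
      Triangle.mk j p' h' ∈ distTriang C := by
  obtain ⟨d, hd, q, hq⟩ := hff.1 W'
  obtain ⟨Z, g, h, hT0⟩ := Pretriangulated.distinguished_cocone_triangle q
  have hTirD : (Triangle.mk q g h).invRotate ∈ distTriang C := inv_rot_of_distTriang _ hT0
  have hTir2D : (Triangle.mk q g h).invRotate.invRotate ∈ distTriang C :=
    inv_rot_of_distTriang _ hTirD
  have hqg : q ≫ g = 0 := comp_distTriang_mor_zero₁₂ _ hT0
  have key : (q⟦(-1 : ℤ)⟧') ≫ (Triangle.mk q g h).invRotate.invRotate.mor₁ = 0 := by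
    simp only [Triangle.invRotate_mor₁, Triangle.invRotate_mor₃, Triangle.mk_mor₂]
    erw [Preadditive.comp_neg, ← Functor.map_comp_assoc, reassoc_of% hqg, zero_comp,
      Functor.map_zero, zero_comp, neg_zero]
  refine ⟨Z⟦(-1 : ℤ)⟧, ?_, d, hd, (Triangle.mk q g h).invRotate.mor₁, ?_,
    q, (Triangle.mk q g h).invRotate.mor₃, ?_⟩
  · intro e he f
    have hfj : f ≫ (Triangle.mk q g h).invRotate.mor₁ = 0 := rigid_hom_zero D hrig he hd _
    obtain ⟨g₁, hg₁⟩ := Triangle.coyoneda_exact₂ _ hTir2D f hfj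
    obtain ⟨g₀, rfl⟩ := (shiftFunctor C (-1 : ℤ)).map_surjective (X := e) (Y := W') g₁
    obtain ⟨t, ht⟩ := hq he g₀
    rw [hg₁, ← ht, Functor.map_comp]
    erw [Category.assoc, key, comp_zero]
    rfl
  · intro e he g2
    have h0 : (Triangle.mk q g h).invRotate.invRotate.mor₁ ≫ g2 = 0 :=
      leftPerp_hom_zero D hW' he _
    obtain ⟨t, ht⟩ := Triangle.yoneda_exact₂ _ hTir2D g2 h0
    exact ⟨t, ht.symm⟩
  · exact hTirD

lemma quot_iso_of_two_approx {X : C} (hD0 : (0 : C) ∈ D) (T₁ T₂ : ApproxTri D X)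
    (h₁ : T₁.W ∈ leftPerpOfShiftOne D) (h₂ : T₂.W ∈ leftPerpOfShiftOne D) :
    Nonempty ((Quotient.functor (idealRel D (leftPerpOfShiftOne D))).obj ⟨T₁.W, h₁⟩ ≅
      (Quotient.functor (idealRel D (leftPerpOfShiftOne D))).obj ⟨T₂.W, h₂⟩) := by
  obtain ⟨w₁₂, hw₁₂⟩ := exists_w D T₁ T₂ (𝟙 X)
  obtain ⟨w₂₁, hw₂₁⟩ := exists_w D T₂ T₁ (𝟙 X)
  have hw₁₂' : w₁₂ ≫ T₂.h = T₁.h := by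
    rw [← hw₁₂]; simp
  have hw₂₁' : w₂₁ ≫ T₁.h = T₂.h := by
    rw [← hw₂₁]; simp
  have spec₁ : T₁.h ≫ (𝟙 X)⟦(1 : ℤ)⟧' = (w₁₂ ≫ w₂₁) ≫ T₁.h := by
    rw [Category.assoc, hw₂₁', hw₁₂']; simp
  have spec₂ : T₂.h ≫ (𝟙 X)⟦(1 : ℤ)⟧' = (w₂₁ ≫ w₁₂) ≫ T₂.h := by
    rw [Category.assoc, hw₁₂', hw₂₁']; simp
  have spec_id₁ : T₁.h ≫ (𝟙 X)⟦(1 : ℤ)⟧' = 𝟙 T₁.W ≫ T₁.h := by simp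
  have spec_id₂ : T₂.h ≫ (𝟙 X)⟦(1 : ℤ)⟧' = 𝟙 T₂.W ≫ T₂.h := by simp
  have triv : FactorsThru D (𝟙 X - 𝟙 X) := by
    simpa only [sub_self] using factorsThru_zero D hD0
  have r₁ : FactorsThru D (w₁₂ ≫ w₂₁ - 𝟙 T₁.W) := spec_rel D T₁ T₁ spec₁ spec_id₁ triv
  have r₂ : FactorsThru D (w₂₁ ≫ w₁₂ - 𝟙 T₂.W) := spec_rel D T₂ T₂ spec₂ spec_id₂ triv
  refine ⟨⟨(Quotient.functor (idealRel D (leftPerpOfShiftOne D))).map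
      (X := ⟨T₁.W, h₁⟩) (Y := ⟨T₂.W, h₂⟩) (ObjectProperty.homMk w₁₂),
    (Quotient.functor (idealRel D (leftPerpOfShiftOne D))).map
      (X := ⟨T₂.W, h₂⟩) (Y := ⟨T₁.W, h₁⟩) (ObjectProperty.homMk w₂₁), ?_, ?_⟩⟩
  · rw [← Functor.map_comp]
    exact (CategoryTheory.Quotient.sound _ r₁).trans ((Quotient.functor _).map_id _)
  · rw [← Functor.map_comp]
    exact (CategoryTheory.Quotient.sound _ r₂).trans ((Quotient.functor _).map_id _)

end Aux


theorem statement1 (D : Set C) (hsum : ClosedSummands D) (hrig : Rigid D)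
    (hff : FunctoriallyFinite D)
    -- part 1 data: a triangle on a left `D`-approximation of `X ∈ D[-1]^⊥`
    (X : C) (hX : X ∈ perpOfShiftNegOne D)
    (DX : C) (hDX : DX ∈ D) (i : X ⟶ DX) (hi : LeftApprox D i)
    (W : C) (p : DX ⟶ W) (h : W ⟶ X⟦(1 : ℤ)⟧)
    (hT : Triangle.mk i p h ∈ distTriang C) :
    -- part 1: the cone lies in `^⊥(D[1])`
    W ∈ leftPerpOfShiftOne D ∧
    -- part 2: `⟨1⟩` induces an equivalence `D[-1]^⊥/[D] ≃ ^⊥(D[1])/[D]`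
    ∃ F : IdealQuotient D (perpOfShiftNegOne D) ⥤ IdealQuotient D (leftPerpOfShiftOne D),
      F.IsEquivalence ∧
      ∀ (X' : ObjectProperty.FullSubcategory (· ∈ perpOfShiftNegOne D))
        (DX' : C) (_ : DX' ∈ D) (i' : X'.obj ⟶ DX') (_ : LeftApprox D i')
        (W' : C) (p' : DX' ⟶ W') (h' : W' ⟶ X'.obj⟦(1 : ℤ)⟧)
        (_ : Triangle.mk i' p' h' ∈ distTriang C) (hW' : W' ∈ leftPerpOfShiftOne D),
        Nonempty
          (F.obj ((Quotient.functor (idealRel D (perpOfShiftNegOne D))).obj X') ≅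
            (Quotient.functor (idealRel D (leftPerpOfShiftOne D))).obj ⟨W', hW'⟩) := by
  have hD0 := zero_mem D hsum hff
  haveI cong2 : Congruence (idealRel D (leftPerpOfShiftOne D)) :=
    congruence_idealRel D hsum hff _
  classical
  refine ⟨cone_mem_leftPerp D hrig ⟨DX, hDX, i, hi, W, p, h, hT⟩, ?_⟩
  let T : ∀ A : ObjectProperty.FullSubcategory (· ∈ perpOfShiftNegOne D), ApproxTri D A.obj :=
    fun A => (approxTri_nonempty D hff A.obj).some
  let QF := Quotient.functor (idealRel D (leftPerpOfShiftOne D))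
  let wsel : ∀ {A B : ObjectProperty.FullSubcategory (· ∈ perpOfShiftNegOne D)} (_ : A ⟶ B),
      ((T A).W ⟶ (T B).W) := fun {A B} u => (exists_w D (T A) (T B) u.hom).choose
  have wspec : ∀ {A B : ObjectProperty.FullSubcategory (· ∈ perpOfShiftNegOne D)} (u : A ⟶ B),
      (T A).h ≫ u.hom⟦(1 : ℤ)⟧' = wsel u ≫ (T B).h :=
    fun {A B} u => (exists_w D (T A) (T B) u.hom).choose_spec
  have triv : ∀ {X1 Y1 : C} (u : X1 ⟶ Y1), FactorsThru D (u - u) := fun u => by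
    simpa only [sub_self] using factorsThru_zero D hD0
  let G : ObjectProperty.FullSubcategory (· ∈ perpOfShiftNegOne D) ⥤
      IdealQuotient D (leftPerpOfShiftOne D) :=
  { obj := fun A => QF.obj ⟨(T A).W, cone_mem_leftPerp D hrig (T A)⟩
    map := fun {A B} u =>
      QF.map (X := ⟨(T A).W, cone_mem_leftPerp D hrig (T A)⟩)
        (Y := ⟨(T B).W, cone_mem_leftPerp D hrig (T B)⟩) (ObjectProperty.homMk (wsel u))
    map_id := fun A => by
      have spec_id : (T A).h ≫ (InducedCategory.Hom.hom (𝟙 A))⟦(1 : ℤ)⟧' = 𝟙 (T A).W ≫ (T A).h := by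
        show (T A).h ≫ (𝟙 A.obj)⟦(1 : ℤ)⟧' = 𝟙 (T A).W ≫ (T A).h
        simp
      have rel : FactorsThru D (wsel (𝟙 A) - 𝟙 (T A).W) :=
        spec_rel D (T A) (T A) (wspec (𝟙 A)) spec_id (triv _)
      exact (CategoryTheory.Quotient.sound _ rel).trans (QF.map_id _)
    map_comp := fun {A B E} u v => by
      have hmc : (shiftFunctor C (1 : ℤ)).map (InducedCategory.Hom.hom (u ≫ v)) =
          (shiftFunctor C (1 : ℤ)).map u.hom ≫ (shiftFunctor C (1 : ℤ)).map v.hom :=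
        (shiftFunctor C (1 : ℤ)).map_comp u.hom v.hom
      have hcomp : (T A).h ≫ (InducedCategory.Hom.hom (u ≫ v))⟦(1 : ℤ)⟧' = (wsel u ≫ wsel v) ≫ (T E).h := by
        rw [hmc, ← Category.assoc, wspec u, Category.assoc, wspec v, ← Category.assoc]
      have rel : FactorsThru D (wsel (u ≫ v) - wsel u ≫ wsel v) :=
        spec_rel D (T A) (T E) (wspec (u ≫ v)) hcomp (triv _)
      exact (CategoryTheory.Quotient.sound _ rel).trans (QF.map_comp _ _) }
  have hGwell : ∀ (A B : ObjectProperty.FullSubcategory (· ∈ perpOfShiftNegOne D)) (u u' : A ⟶ B),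
      idealRel D (perpOfShiftNegOne D) u u' → G.map u = G.map u' := by
    intro A B u u' hr
    exact CategoryTheory.Quotient.sound _ (spec_rel D (T A) (T B) (wspec u) (wspec u') hr)
  let F := CategoryTheory.Quotient.lift (idealRel D (perpOfShiftNegOne D)) G hGwell
  have hfaith : F.Faithful := by
    refine ⟨?_⟩
    intro P1 Q1 f g hfg
    obtain ⟨u⟩ := f
    obtain ⟨u'⟩ := g
    have h1 : QF.map (X := ⟨(T P1.as).W, cone_mem_leftPerp D hrig (T P1.as)⟩)
        (Y := ⟨(T Q1.as).W, cone_mem_leftPerp D hrig (T Q1.as)⟩)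
        (ObjectProperty.homMk (wsel u)) = QF.map (ObjectProperty.homMk (wsel u')) := hfg
    have h2 : FactorsThru D (wsel u - wsel u') :=
      (CategoryTheory.Quotient.functor_map_eq_iff
        (idealRel D (leftPerpOfShiftOne D)) _ _).mp h1
    have hspec : (T P1.as).h ≫ (u.hom - u'.hom)⟦(1 : ℤ)⟧' =
        (wsel u - wsel u') ≫ (T Q1.as).h := by
      rw [Functor.map_sub, Preadditive.comp_sub, wspec u, wspec u', ← Preadditive.sub_comp]
    have h3 : FactorsThru D (u.hom - u'.hom) :=
      factorsThru_u D (T P1.as) (T Q1.as) Q1.as.property hspec h2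
    exact CategoryTheory.Quotient.sound _ h3
  have hfull : F.Full := by
    refine ⟨?_⟩
    intro P1 Q1 f
    obtain ⟨w⟩ := f
    let w' : (T P1.as).W ⟶ (T Q1.as).W := w.hom
    obtain ⟨u, hu⟩ := exists_u D (T P1.as) (T Q1.as) Q1.as.property w'
    refine ⟨(Quotient.functor (idealRel D (perpOfShiftNegOne D))).map
      (X := P1.as) (Y := Q1.as) (ObjectProperty.homMk u), ?_⟩
    have rel : FactorsThru D (wsel (ObjectProperty.homMk u) - w') :=
      spec_rel D (T P1.as) (T Q1.as) (wspec (ObjectProperty.homMk u)) hu (triv _)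
    exact CategoryTheory.Quotient.sound _ rel
  have hes : F.EssSurj := by
    refine ⟨?_⟩
    intro Q1
    obtain ⟨X1, hX1, d, hd, j, hj, p', h', htri⟩ :=
      exists_preimage D hrig hff Q1.as.property
    let T' : ApproxTri D X1 := ⟨d, hd, j, hj, Q1.as.obj, p', h', htri⟩
    obtain ⟨e⟩ := quot_iso_of_two_approx D hD0 (T ⟨X1, hX1⟩) T'
      (cone_mem_leftPerp D hrig _) Q1.as.property
    exact ⟨(Quotient.functor (idealRel D (perpOfShiftNegOne D))).obj ⟨X1, hX1⟩, ⟨e⟩⟩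
  refine ⟨F, ⟨hfaith, hfull, hes⟩, ?_⟩
  intro X' DX' hDX' i' hi' W' p' h' htri' hW'
  exact quot_iso_of_two_approx D hD0 (T X') ⟨DX', hDX', i', hi', W', p', h', htri'⟩
    (cone_mem_leftPerp D hrig _) hW'


end Stmt1
end

section
/- Let (C, E, s) be an extriangulated category and I a full additive subcategory that is strongly contravariantly finite in C (every object X admits a deflation I_X → X which is a right I-approximation). Then I equals the subcategory of projective objects for the relative extriangulated structure E_I, and (C, E_I, s|_{E_I}) has enough projectives. Here E_I(C,A) = {δ ∈ E(C,A) : the induced map δ∘- : Hom(I', C) → E(I', A) is zero for all I' ∈ I}. -/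
/-!
STATEMENT 4: If I is strongly contravariantly finite in an extriangulated category C,
then I equals the projectives of the relative structure E_I, and (C, E_I) has enough projectives.
-/

set_option linter.unusedSectionVars false

open CategoryTheory CategoryTheory.Limits Opposite

universe v u

variable (C : Type u) [Category.{v} C] [Preadditive C] [HasZeroObject C] [HasBinaryBiproducts C]

/-- An extriangulated category structure on `C` (Nakaoka–Palu): an additive bifunctor
`E : Cᵒᵖ × C ⥤ Ab` together with an additive realization of extensions by conflations,
subject to the axioms (ET1)–(ET4) and their duals.  The realization is encoded by the
predicate `conf f g δ` expressing that `X ⟶ Y ⟶ Z` realizes `δ ∈ E(Z, X)`. -/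
structure ETStruct where
  /-- the extension bifunctor (ET1) -/
  E : Cᵒᵖ ⥤ C ⥤ AddCommGrpCat.{v}
  /-- `E` is additive in the contravariant variable -/
  additive_op : E.Additive
  /-- `E` is additive in the covariant variable -/
  additive : ∀ Z : Cᵒᵖ, (E.obj Z).Additive
  /-- `conf f g δ` : the sequence `f, g` realizes the extension `δ` (it is an s-conflation) -/
  conf : ∀ ⦃X Y Z : C⦄, (X ⟶ Y) → (Y ⟶ Z) → ((E.obj (op Z)).obj X) → Prop
  /-- every extension is realized by some conflation (ET2) -/
  exists_real : ∀ ⦃X Z : C⦄ (δ : (E.obj (op Z)).obj X),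
      ∃ (Y : C) (f : X ⟶ Y) (g : Y ⟶ Z), conf f g δ
  comp_zero : ∀ ⦃X Y Z : C⦄ ⦃f : X ⟶ Y⦄ ⦃g : Y ⟶ Z⦄ ⦃δ : (E.obj (op Z)).obj X⦄,
      conf f g δ → f ≫ g = 0
  /-- realizations are well defined up to equivalence of three-term sequences -/
  conf_iso : ∀ ⦃X Y Y' Z : C⦄ ⦃f : X ⟶ Y⦄ ⦃g : Y ⟶ Z⦄ ⦃δ : (E.obj (op Z)).obj X⦄
      (e : Y ≅ Y'), conf f g δ → conf (f ≫ e.hom) (e.inv ≫ g) δ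
  /-- the realization is additive: `0` is realized by the split conflation -/
  conf_zero : ∀ (X Z : C), conf (biprod.inl : X ⟶ X ⊞ Z) (biprod.snd : X ⊞ Z ⟶ Z)
      (0 : (E.obj (op Z)).obj X)
  /-- conversely, a conflation realizing `0` splits -/
  split_of_zero : ∀ ⦃X Y Z : C⦄ ⦃f : X ⟶ Y⦄ ⦃g : Y ⟶ Z⦄,
      conf f g (0 : (E.obj (op Z)).obj X) → ∃ s : Z ⟶ Y, s ≫ g = 𝟙 Z
  /-- (ET3) -/
  et3 : ∀ ⦃X Y Z X' Y' Z' : C⦄ ⦃f : X ⟶ Y⦄ ⦃g : Y ⟶ Z⦄ ⦃δ : (E.obj (op Z)).obj X⦄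
      ⦃f' : X' ⟶ Y'⦄ ⦃g' : Y' ⟶ Z'⦄ ⦃δ' : (E.obj (op Z')).obj X'⦄
      (a : X ⟶ X') (b : Y ⟶ Y'), conf f g δ → conf f' g' δ' → f ≫ b = a ≫ f' →
      ∃ c : Z ⟶ Z', g ≫ c = b ≫ g' ∧
        (E.map c.op).app X' δ' = ((E.obj (op Z)).map a) δ
  /-- (ET3)ᵒᵖ -/
  et3op : ∀ ⦃X Y Z X' Y' Z' : C⦄ ⦃f : X ⟶ Y⦄ ⦃g : Y ⟶ Z⦄ ⦃δ : (E.obj (op Z)).obj X⦄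
      ⦃f' : X' ⟶ Y'⦄ ⦃g' : Y' ⟶ Z'⦄ ⦃δ' : (E.obj (op Z')).obj X'⦄
      (b : Y ⟶ Y') (c : Z ⟶ Z'), conf f g δ → conf f' g' δ' → g ≫ c = b ≫ g' →
      ∃ a : X ⟶ X', f ≫ b = a ≫ f' ∧
        (E.map c.op).app X' δ' = ((E.obj (op Z)).map a) δ
  /-- (ET4) -/
  et4 : ∀ ⦃X Y Z Cc Dd : C⦄ ⦃f : X ⟶ Y⦄ ⦃f' : Y ⟶ Cc⦄ ⦃δ : (E.obj (op Cc)).obj X⦄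
      ⦃g : Y ⟶ Z⦄ ⦃g' : Z ⟶ Dd⦄ ⦃ε : (E.obj (op Dd)).obj Y⦄,
      conf f f' δ → conf g g' ε →
      ∃ (Ee : C) (h' : Z ⟶ Ee) (δ' : (E.obj (op Ee)).obj X) (c : Cc ⟶ Ee) (d : Ee ⟶ Dd),
        conf (f ≫ g) h' δ' ∧ conf c d (((E.obj (op Dd)).map f') ε) ∧
        f' ≫ c = g ≫ h' ∧ h' ≫ d = g' ∧ (E.map c.op).app X δ' = δ
  /-- long-exact-sequence property: `δ` pulled back along `h` vanishes iff `h` lifts -/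
  pull_zero_iff : ∀ ⦃X Y Z : C⦄ ⦃f : X ⟶ Y⦄ ⦃g : Y ⟶ Z⦄ ⦃δ : (E.obj (op Z)).obj X⦄,
      conf f g δ → ∀ ⦃W : C⦄ (h : W ⟶ Z),
        ((E.map h.op).app X δ = 0 ↔ ∃ k : W ⟶ Y, k ≫ g = h)
  /-- long-exact-sequence property: `δ` pushed forward along `h` vanishes iff `h` extends -/
  push_zero_iff : ∀ ⦃X Y Z : C⦄ ⦃f : X ⟶ Y⦄ ⦃g : Y ⟶ Z⦄ ⦃δ : (E.obj (op Z)).obj X⦄,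
      conf f g δ → ∀ ⦃W : C⦄ (h : X ⟶ W),
        (((E.obj (op Z)).map h) δ = 0 ↔ ∃ k : Y ⟶ W, f ≫ k = h)

namespace ETStruct

variable {C}
variable (T : ETStruct C)

/-- The group of `E`-extensions of `Z` by `X`. -/
abbrev ext (Z X : C) : Type v := (T.E.obj (op Z)).obj X

/-- Push-forward `a · δ` of an extension along `a : X ⟶ X'`. -/
def push {X X' Z : C} (a : X ⟶ X') (δ : T.ext Z X) : T.ext Z X' :=
  ((T.E.obj (op Z)).map a) δ

/-- Pull-back `δ · b` of an extension along `b : Z' ⟶ Z`. -/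
def pull {Z' Z X : C} (b : Z' ⟶ Z) (δ : T.ext Z X) : T.ext Z' X :=
  ((T.E.map b.op).app X) δ

/-- `δ ∈ E_I(Z, X)`: `δ` pulls back to zero from every object of `I`. -/
def memDown (I : Set C) {Z X : C} (δ : T.ext Z X) : Prop :=
  ∀ ⦃W : C⦄, W ∈ I → ∀ f : W ⟶ Z, T.pull f δ = 0

/-- `δ ∈ E^I(Z, X)`: `δ` pushes forward to zero into every object of `I`. -/
def memUp (I : Set C) {Z X : C} (δ : T.ext Z X) : Prop :=
  ∀ ⦃W : C⦄, W ∈ I → ∀ g : X ⟶ W, T.push g δ = 0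

end ETStruct

/-- `f : d ⟶ X` is a right `D`-approximation. -/
def RightApprox (D : Set C) {d X : C} (f : d ⟶ X) : Prop :=
  ∀ ⦃d' : C⦄, d' ∈ D → ∀ g : d' ⟶ X, ∃ h : d' ⟶ d, h ≫ f = g

/-- `f : X ⟶ d` is a left `D`-approximation. -/
def LeftApprox (D : Set C) {X d : C} (f : X ⟶ d) : Prop :=
  ∀ ⦃d' : C⦄, d' ∈ D → ∀ g : X ⟶ d', ∃ h : d ⟶ d', f ≫ h = g

def ClosedSummands (D : Set C) : Prop :=
  ∀ ⦃X Y : C⦄, X ∈ D → ∀ (i : Y ⟶ X) (p : X ⟶ Y), i ≫ p = 𝟙 Y → Y ∈ D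

variable {C}

namespace ETStruct

variable (T : ETStruct C)

/-- `I` is strongly contravariantly finite in `Xc`: every `X ∈ Xc` admits a deflation
from an object of `I` which is a right `I`-approximation. -/
def StronglyContraFinite (I Xc : Set C) : Prop :=
  ∀ ⦃X : C⦄, X ∈ Xc → ∃ W ∈ I, ∃ p : W ⟶ X, RightApprox C I p ∧
    ∃ (X' : C) (i : X' ⟶ W) (δ : T.ext X X'), T.conf i p δ

/-- `I` is strongly covariantly finite in `Xc`: every `X ∈ Xc` admits an inflation
into an object of `I` which is a left `I`-approximation. -/
def StronglyCovFinite (I Xc : Set C) : Prop :=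
  ∀ ⦃X : C⦄, X ∈ Xc → ∃ W ∈ I, ∃ i : X ⟶ W, LeftApprox C I i ∧
    ∃ (Z : C) (p : W ⟶ Z) (δ : T.ext Z X), T.conf i p δ

/-- `Cone_P(A, B)`: objects `Z` admitting a conflation `A' ⟶ B' ⟶ Z` whose extension
class satisfies `P` (e.g. lies in `E^I` or `E_I`), with `A' ∈ A` and `B' ∈ B`. -/
def coneRel (P : ∀ ⦃Z X : C⦄, T.ext Z X → Prop) (A B : Set C) : Set C :=
  {Z | ∃ (A' B' : C) (_ : A' ∈ A) (_ : B' ∈ B) (f : A' ⟶ B') (g : B' ⟶ Z)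
      (δ : T.ext Z A'), T.conf f g δ ∧ P δ}

/-- `CoCone_P(A, B)`: objects `W` admitting a conflation `W ⟶ A' ⟶ B'` whose extension
class satisfies `P`, with `A' ∈ A` and `B' ∈ B`. -/
def coconeRel (P : ∀ ⦃Z X : C⦄, T.ext Z X → Prop) (A B : Set C) : Set C :=
  {W | ∃ (A' B' : C) (_ : A' ∈ A) (_ : B' ∈ B) (f : W ⟶ A') (g : A' ⟶ B')
      (δ : T.ext B' W), T.conf f g δ ∧ P δ}

/-- `E^I(A, B) = 0` (`A` in the contravariant slot). -/
def vanishUp (I A B : Set C) : Prop :=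
  ∀ ⦃Z X : C⦄, Z ∈ A → X ∈ B → ∀ δ : T.ext Z X, T.memUp I δ → δ = 0

/-- `E_I(A, B) = 0` (`A` in the contravariant slot). -/
def vanishDown (I A B : Set C) : Prop :=
  ∀ ⦃Z X : C⦄, Z ∈ A → X ∈ B → ∀ δ : T.ext Z X, T.memDown I δ → δ = 0

/-- `A` is closed under extensions in `(C, E^I)`. -/
def extClosedUp (I A : Set C) : Prop :=
  ∀ ⦃X Y Z : C⦄ ⦃f : X ⟶ Y⦄ ⦃g : Y ⟶ Z⦄ ⦃δ : T.ext Z X⦄,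
    T.conf f g δ → T.memUp I δ → X ∈ A → Z ∈ A → Y ∈ A

/-- `A` is closed under extensions in `(C, E_I)`. -/
def extClosedDown (I A : Set C) : Prop :=
  ∀ ⦃X Y Z : C⦄ ⦃f : X ⟶ Y⦄ ⦃g : Y ⟶ Z⦄ ⦃δ : T.ext Z X⦄,
    T.conf f g δ → T.memDown I δ → X ∈ A → Z ∈ A → Y ∈ A

/-- `Z⟨1⟩ = Cone_{E^I}(Z, I)`. -/
def shiftPlus (I Zc : Set C) : Set C := T.coneRel (fun _ _ δ => T.memUp I δ) Zc I

/-- `Z⟨-1⟩ = CoCone_{E_I}(I, Z)`. -/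
def shiftMinus (I Zc : Set C) : Set C := T.coconeRel (fun _ _ δ => T.memDown I δ) I Zc

/-- `Ũ = CoCone_{E^I}(Z, S)`. -/
def Utilde (I Sc Zc : Set C) : Set C := T.coconeRel (fun _ _ δ => T.memUp I δ) Zc Sc

/-- `T̃ = Cone_{E_I}(V, Z)`. -/
def Ttilde (I Zc Vc : Set C) : Set C := T.coneRel (fun _ _ δ => T.memDown I δ) Vc Zc

end ETStruct


theorem statement4 (T : ETStruct C) (I : Set C) (hsum : ClosedSummands C I)
    (hscf : T.StronglyContraFinite I Set.univ) :
    -- `I` equals the class of `E_I`-projective objects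
    (∀ P : C, P ∈ I ↔ ∀ (A : C) (δ : T.ext P A), T.memDown I δ → δ = 0) ∧
    -- `(C, E_I, s|_{E_I})` has enough projectives
    (∀ X : C, ∃ (P : C) (_ : P ∈ I) (X' : C) (f : X' ⟶ P) (g : P ⟶ X) (δ : T.ext X X'),
      T.conf f g δ ∧ T.memDown I δ) := by
  have key : ∀ X : C, ∃ W ∈ I, ∃ (p : W ⟶ X) (X' : C) (i : X' ⟶ W) (δ : T.ext X X'),
      T.conf i p δ ∧ T.memDown I δ := by
    intro X
    obtain ⟨W, hW, p, hap, X', i, δ, hconf⟩ := hscf (Set.mem_univ X)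
    refine ⟨W, hW, p, X', i, δ, hconf, ?_⟩
    intro W' hW' f
    rw [ETStruct.pull, (T.pull_zero_iff hconf f)]
    exact hap hW' f
  constructor
  · intro P
    constructor
    · intro hP A δ hδ
      have := hδ hP (𝟙 P)
      simpa [ETStruct.pull] using this
    · intro hproj
      obtain ⟨W, hW, p, X', i, δ, hconf, hmem⟩ := key P
      have hz : δ = 0 := hproj X' δ hmem
      subst hz
      obtain ⟨s, hs⟩ := T.split_of_zero hconf
      exact hsum hW s p hs
  · intro X
    obtain ⟨W, hW, p, X', i, δ, hconf, hmem⟩ := key X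
    exact ⟨W, hW, X', i, p, δ, hconf, hmem⟩
end

section
/- Let (C, E, s) be an extriangulated category, I ⊆ C strongly covariantly finite, and a : X → Y a morphism. Choose s^I-triangles X → I^X → X⟨1⟩ --λ--> X and X → J^X → X⟨1⟩' --λ'--> X where X → I^X and X → J^X are left I-approximations, and form cones C^a, C^{a'}, C^{a''} of the inflations (a, i^X)^T : X → Y ⊕ I^X, (a, j^X)^T : X → Y ⊕ J^X, and (a, i^X, j^X)^T : X → Y ⊕ I^X ⊕ J^X respectively. Then C^{a''} ≅ C^a ⊕ J^X ≅ C^{a'} ⊕ I^X. In particular the cone C^a of a is uniquely determined up to isomorphism in the quotient C/[I]. -/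
/-!
STATEMENT 8: uniqueness of the cone of a morphism up to the ideal [I]: with two choices
of left I-approximation the cones satisfy C^{a''} ≅ C^a ⊕ J^X ≅ C^{a'} ⊕ I^X;
in particular the cone of a is unique up to isomorphism in C/[I].
-/

set_option linter.unusedSectionVars false

open CategoryTheory CategoryTheory.Limits Opposite

universe v u

variable (C : Type u) [Category.{v} C] [Preadditive C] [HasZeroObject C] [HasBinaryBiproducts C]

variable {C}

section Aux

open ZeroObject

variable (T : ETStruct C)

/-- op of a difference of morphisms. -/
lemma auxOpSub {A B : C} (u v : A ⟶ B) : (u - v).op = u.op - v.op :=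
  map_sub (opHom A B) u v

lemma auxPullComp {A B Z X : C} (u : A ⟶ B) (v : B ⟶ Z) (δ : T.ext Z X) :
    T.pull (u ≫ v) δ = T.pull u (T.pull v δ) := by
  simp [ETStruct.pull, op_comp]

lemma auxPullId {Z X : C} (δ : T.ext Z X) : T.pull (𝟙 Z) δ = δ := by
  simp [ETStruct.pull]

lemma auxPullSub {Z' Z X : C} (u v : Z' ⟶ Z) (δ : T.ext Z X) :
    T.pull (u - v) δ = T.pull u δ - T.pull v δ := by
  haveI := T.additive_op
  rw [ETStruct.pull, auxOpSub, Functor.map_sub, NatTrans.app_sub]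
  rfl

/-- From a left inverse and a right inverse, build an isomorphism. -/
def auxIso {A B : C} (x : A ⟶ B) (l r : B ⟶ A) (hl : l ≫ x = 𝟙 B) (hr : x ≫ r = 𝟙 A) :
    A ≅ B where
  hom := x
  inv := r
  hom_inv_id := hr
  inv_hom_id := by
    have : r = l := by
      calc r = (l ≫ x) ≫ r := by rw [hl, Category.id_comp]
        _ = l ≫ (x ≫ r) := by rw [Category.assoc]
        _ = l := by rw [hr, Category.comp_id]
    rw [this, hl]

/-- The trivial conflation `W = W → 0`. -/
lemma auxZeroConf (W : C) : T.conf (𝟙 W) (0 : W ⟶ (0 : C)) 0 := by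
  have h := T.conf_zero W (0 : C)
  let e : (W ⊞ (0 : C)) ≅ W :=
    { hom := biprod.fst
      inv := biprod.inl
      hom_inv_id := by
        apply biprod.hom_ext
        · simp
        · exact (isZero_zero C).eq_of_tgt _ _
      inv_hom_id := by simp }
  have h2 := T.conf_iso e h
  simp only [show e.hom = biprod.fst from rfl, show e.inv = biprod.inl from rfl,
    biprod.inl_fst, biprod.inl_snd] at h2
  exact h2

/-- Exactness at the middle term: a morphism killed by the deflation factors
through the inflation. -/
lemma auxExactMid {X M Z : C} {f : X ⟶ M} {g : M ⟶ Z} {δ : T.ext Z X}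
    (hc : T.conf f g δ) {W : C} (h : W ⟶ M) (hh : h ≫ g = 0) :
    ∃ e : W ⟶ X, e ≫ f = h := by
  obtain ⟨a, ha, -⟩ := T.et3op h (0 : (0 : C) ⟶ Z) (auxZeroConf T W) hc (by simp [hh])
  exact ⟨a, by simpa using ha.symm⟩

/-- Uniqueness of the cone of a given inflation. -/
lemma auxConeUnique {X M Z₁ Z₂ : C} {f : X ⟶ M} {g₁ : M ⟶ Z₁} {g₂ : M ⟶ Z₂}
    {δ₁ : T.ext Z₁ X} {δ₂ : T.ext Z₂ X} (h1 : T.conf f g₁ δ₁) (h2 : T.conf f g₂ δ₂) :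
    Nonempty (Z₁ ≅ Z₂) := by
  obtain ⟨c, hgc, hcδ⟩ := T.et3 (𝟙 X) (𝟙 M) h1 h2 (by simp)
  obtain ⟨c', hgc', hc'δ⟩ := T.et3 (𝟙 X) (𝟙 M) h2 h1 (by simp)
  rw [Category.id_comp] at hgc hgc'
  have hcδ : T.pull c δ₂ = δ₁ := by
    rw [show T.pull c δ₂ = (T.E.map c.op).app X δ₂ from rfl, hcδ]
    simp
  have hc'δ : T.pull c' δ₁ = δ₂ := by
    rw [show T.pull c' δ₁ = (T.E.map c'.op).app X δ₁ from rfl, hc'δ]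
    simp
  -- u = c ≫ c' - 𝟙 is square-zero
  set u : Z₁ ⟶ Z₁ := c ≫ c' - 𝟙 Z₁ with hu
  have hpu : T.pull u δ₁ = 0 := by
    rw [hu, auxPullSub, auxPullComp, hc'δ, hcδ, auxPullId, sub_self]
  obtain ⟨k, hk⟩ := (T.pull_zero_iff h1 u).mp hpu
  have hgu : g₁ ≫ u = 0 := by
    rw [hu, Preadditive.comp_sub, ← Category.assoc, hgc, hgc', Category.comp_id, sub_self]
  have hu2 : u ≫ u = 0 := by
    rw [← hk, Category.assoc, hk, hgu, Limits.comp_zero]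
  -- similarly for u' = c' ≫ c - 𝟙
  set u' : Z₂ ⟶ Z₂ := c' ≫ c - 𝟙 Z₂ with hu'
  have hp'u : T.pull u' δ₂ = 0 := by
    rw [hu', auxPullSub, auxPullComp, hcδ, hc'δ, auxPullId, sub_self]
  obtain ⟨k', hk'⟩ := (T.pull_zero_iff h2 u').mp hp'u
  have hgu' : g₂ ≫ u' = 0 := by
    rw [hu', Preadditive.comp_sub, ← Category.assoc, hgc', hgc, Category.comp_id, sub_self]
  have hu'2 : u' ≫ u' = 0 := by
    rw [← hk', Category.assoc, hk', hgu', Limits.comp_zero]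
  refine ⟨auxIso c ((𝟙 Z₂ - u') ≫ c') (c' ≫ (𝟙 Z₁ - u)) ?_ ?_⟩
  · have h : c' ≫ c = 𝟙 Z₂ + u' := by rw [hu']; abel
    rw [Category.assoc, h]
    simp only [Preadditive.sub_comp, Preadditive.comp_add, Category.id_comp,
      Category.comp_id, hu'2]
    abel
  · have h : c ≫ c' = 𝟙 Z₁ + u := by rw [hu]; abel
    rw [← Category.assoc, h]
    simp only [Preadditive.add_comp, Preadditive.comp_sub, Category.id_comp,
      Category.comp_id, hu2]
    abel

/-- A conflation with vanishing class is a split one: the middle term is a biproduct. -/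
lemma auxSplit {Cz J Ee : C} {c : Cz ⟶ Ee} {d : Ee ⟶ J} (hc : T.conf c d 0) :
    Nonempty (Ee ≅ Cz ⊞ J) := by
  obtain ⟨s, hs⟩ := T.split_of_zero hc
  obtain ⟨r, hr⟩ := (T.push_zero_iff hc (𝟙 Cz)).mp (by simp)
  have hcd : c ≫ d = 0 := T.comp_zero hc
  set φ : Cz ⊞ J ⟶ Ee := biprod.desc c s with hφ
  set ψ : Ee ⟶ Cz ⊞ J := biprod.lift r d with hψ
  -- ψ ≫ φ = 𝟙 + w with w square-zero
  set θ : Ee ⟶ Ee := ψ ≫ φ with hθ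
  have hθ' : θ = r ≫ c + d ≫ s := by rw [hθ, hψ, hφ, biprod.lift_desc]
  have hcθ : c ≫ θ = c := by
    rw [hθ', Preadditive.comp_add, ← Category.assoc, ← Category.assoc, hr, hcd,
      Category.id_comp, Limits.zero_comp, add_zero]
  have hθd : θ ≫ d = d := by
    rw [hθ', Preadditive.add_comp, Category.assoc, Category.assoc, hcd, hs,
      Limits.comp_zero, Category.comp_id, zero_add]
  set w : Ee ⟶ Ee := θ - 𝟙 Ee with hw
  have hwd : w ≫ d = 0 := by rw [hw, Preadditive.sub_comp, hθd, Category.id_comp, sub_self]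
  obtain ⟨e, he⟩ := auxExactMid T hc w hwd
  have hcw : c ≫ w = 0 := by rw [hw, Preadditive.comp_sub, hcθ, Category.comp_id, sub_self]
  have hw2 : w ≫ w = 0 := by
    rw [← he, Category.assoc, he, hcw, Limits.comp_zero]
  -- φ ≫ ψ = 𝟙 + n with n square-zero
  set n : Cz ⊞ J ⟶ Cz ⊞ J := φ ≫ ψ - 𝟙 _ with hn
  have hinl : biprod.inl ≫ n = 0 := by
    rw [hn, Preadditive.comp_sub, Category.comp_id, hφ, hψ]
    apply biprod.hom_ext <;> simp [hr, hcd]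
  have hinr : biprod.inr ≫ n = (s ≫ r) ≫ biprod.inl := by
    rw [hn, Preadditive.comp_sub, Category.comp_id, hφ, hψ]
    apply biprod.hom_ext <;> simp [hs]
  have hn2 : n ≫ n = 0 := by
    apply biprod.hom_ext'
    · rw [← Category.assoc, hinl, Limits.zero_comp, Limits.comp_zero]
    · rw [← Category.assoc, hinr, Category.assoc, hinl, Limits.comp_zero, Limits.comp_zero]
  have hφψ : φ ≫ ψ = 𝟙 _ + n := by rw [hn]; abel
  have hψφ : ψ ≫ φ = 𝟙 Ee + w := by rw [hw, ← hθ]; abel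
  refine ⟨(auxIso φ ((𝟙 _ - w) ≫ ψ) (ψ ≫ (𝟙 _ - n)) ?_ ?_).symm⟩
  · rw [Category.assoc, hψφ]
    simp only [Preadditive.sub_comp, Preadditive.comp_add, Category.id_comp,
      Category.comp_id, hw2]
    abel
  · rw [← Category.assoc, hφψ]
    simp only [Preadditive.add_comp, Preadditive.comp_sub, Category.id_comp,
      Category.comp_id, hn2]
    abel

/-- Key step: if `j = f ≫ t` factors through the inflation `f`, then the cone of
`(f, j)ᵀ : X ⟶ M ⊞ J` is `Cone(f) ⊞ J`. -/
lemma auxMain {X M J Cz C₂ : C} (f : X ⟶ M) (t : M ⟶ J) {g : M ⟶ Cz} {δ : T.ext Cz X}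
    (hc : T.conf f g δ) {g₂ : M ⊞ J ⟶ C₂} {δ₂ : T.ext C₂ X}
    (hc₂ : T.conf (biprod.lift f (f ≫ t)) g₂ δ₂) :
    Nonempty (C₂ ≅ Cz ⊞ J) := by
  let σ : (M ⊞ J) ≅ (M ⊞ J) :=
    { hom := biprod.lift biprod.fst (biprod.snd - biprod.fst ≫ t)
      inv := biprod.lift biprod.fst (biprod.snd + biprod.fst ≫ t)
      hom_inv_id := by apply biprod.hom_ext <;> simp
      inv_hom_id := by apply biprod.hom_ext <;> simp }
  have h₂' := T.conf_iso σ hc₂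
  have hfl : biprod.lift f (f ≫ t) ≫ σ.hom = f ≫ biprod.inl := by
    apply biprod.hom_ext <;> simp [σ]
  rw [hfl] at h₂'
  obtain ⟨Ee, h', δ₀, c, d, hEe, hcd0, -, -, -⟩ := T.et4 hc (T.conf_zero M J)
  rw [map_zero] at hcd0
  obtain ⟨e1⟩ := auxConeUnique T h₂' hEe
  obtain ⟨e2⟩ := auxSplit T hcd0
  exact ⟨e1.trans e2⟩

end Aux

theorem statement8 (T : ETStruct C) (I : Set C) (hsum : ClosedSummands C I)
    (hscf : T.StronglyCovFinite I Set.univ)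
    {X Y IX JX : C} (a : X ⟶ Y) (hIX : IX ∈ I) (hJX : JX ∈ I)
    (iX : X ⟶ IX) (hiX : LeftApprox C I iX)
    (jX : X ⟶ JX) (hjX : LeftApprox C I jX)
    -- the given s^I-triangles on the left approximations
    {W₁ W₂ : C} (p : IX ⟶ W₁) (lam : T.ext W₁ X) (hlam : T.conf iX p lam ∧ T.memUp I lam)
    (q : JX ⟶ W₂) (lam' : T.ext W₂ X) (hlam' : T.conf jX q lam' ∧ T.memUp I lam')
    -- the three cones
    {Ca Ca' Ca'' : C}
    (b : Y ⊞ IX ⟶ Ca) (δ : T.ext Ca X)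
    (hca : T.conf (biprod.lift a iX) b δ ∧ T.memUp I δ)
    (b' : Y ⊞ JX ⟶ Ca') (δ' : T.ext Ca' X)
    (hca' : T.conf (biprod.lift a jX) b' δ' ∧ T.memUp I δ')
    (b'' : Y ⊞ (IX ⊞ JX) ⟶ Ca'') (δ'' : T.ext Ca'' X)
    (hca'' : T.conf (biprod.lift a (biprod.lift iX jX)) b'' δ'' ∧ T.memUp I δ'') :
    Nonempty (Ca'' ≅ Ca ⊞ JX) ∧ Nonempty (Ca'' ≅ Ca' ⊞ IX) := by
  obtain ⟨h, hh⟩ := hiX hJX jX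
  obtain ⟨h', hh'⟩ := hjX hIX iX
  constructor
  · -- transport the conflation for `Ca''` along the associativity shuffle
    let e : (Y ⊞ (IX ⊞ JX)) ≅ ((Y ⊞ IX) ⊞ JX) :=
      { hom := biprod.lift (biprod.lift biprod.fst (biprod.snd ≫ biprod.fst))
          (biprod.snd ≫ biprod.snd)
        inv := biprod.lift (biprod.fst ≫ biprod.fst)
          (biprod.lift (biprod.fst ≫ biprod.snd) biprod.snd)
        hom_inv_id := by
          apply biprod.hom_ext
          · simp
          · apply biprod.hom_ext <;> simp
        inv_hom_id := by
          apply biprod.hom_ext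
          · apply biprod.hom_ext <;> simp
          · simp }
    have hc'' := T.conf_iso e hca''.1
    have heq : biprod.lift a (biprod.lift iX jX) ≫ e.hom
        = biprod.lift (biprod.lift a iX) ((biprod.lift a iX) ≫ (biprod.snd ≫ h)) := by
      apply biprod.hom_ext
      · apply biprod.hom_ext <;> simp [e]
      · simp [e, hh]
    rw [heq] at hc''
    exact auxMain T (biprod.lift a iX) (biprod.snd ≫ h) hca.1 hc''
  · let e : (Y ⊞ (IX ⊞ JX)) ≅ ((Y ⊞ JX) ⊞ IX) :=
      { hom := biprod.lift (biprod.lift biprod.fst (biprod.snd ≫ biprod.snd))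
          (biprod.snd ≫ biprod.fst)
        inv := biprod.lift (biprod.fst ≫ biprod.fst)
          (biprod.lift biprod.snd (biprod.fst ≫ biprod.snd))
        hom_inv_id := by
          apply biprod.hom_ext
          · simp
          · apply biprod.hom_ext <;> simp
        inv_hom_id := by
          apply biprod.hom_ext
          · apply biprod.hom_ext <;> simp
          · simp }
    have hc'' := T.conf_iso e hca''.1
    have heq : biprod.lift a (biprod.lift iX jX) ≫ e.hom
        = biprod.lift (biprod.lift a jX) ((biprod.lift a jX) ≫ (biprod.snd ≫ h')) := by
      apply biprod.hom_ext
      · apply biprod.hom_ext <;> simp [e]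
      · simp [e, hh']
    rw [heq] at hc''
    exact auxMain T (biprod.lift a jX) (biprod.snd ≫ h') hca'.1 hc''
end

section
/- Let (S, Z, V) be a premutation triple in an extriangulated category (C, E, s), and for U ∈ Ũ := CoCone_{E^I}(Z, S) take an s^I-triangle U →^{h} Z^U → S' --→ U with Z^U ∈ Z, S' ∈ S. Then precomposition with h induces a natural isomorphism Hom_{Z/[I]}(Z^U, Z') ≅ Hom_{Ũ/[I]}(U, Z') for every Z' ∈ Z. Consequently U ↦ Z^U extends to an additive functor σ : Ũ/[I] → Z/[I] which is left adjoint to the inclusion Z/[I] → Ũ/[I]. -/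
/-!
STATEMENT 9: adjoint functor σ for premutation triples.
-/

set_option linter.unusedSectionVars false

open CategoryTheory CategoryTheory.Limits Opposite

universe v u

variable (C : Type u) [Category.{v} C] [Preadditive C] [HasZeroObject C] [HasBinaryBiproducts C]

variable {C}

section IdealQuotient

/-- `f` factors through an object of `I`. -/
def FactorsThru (I : Set C) {X Y : C} (f : X ⟶ Y) : Prop :=
  ∃ (W : C) (_ : W ∈ I) (p : X ⟶ W) (q : W ⟶ Y), f = p ≫ q

/-- Morphisms of the full subcategory on `Z` are identified when their difference factors
through an object of `I`; the quotient is the additive quotient `Z/[I]`. -/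
def idealRel (I Z : Set C) : HomRel (ObjectProperty.FullSubcategory (· ∈ Z)) :=
  fun {X Y} f g => FactorsThru I (f.hom - g.hom)

/-- The additive quotient `Z/[I]`. -/
abbrev IdealQuotient (I Z : Set C) := CategoryTheory.Quotient (idealRel I Z)

variable {I : Set C}

theorem factorsThru_zero (hne : I.Nonempty) (X Y : C) : FactorsThru I (0 : X ⟶ Y) := by
  obtain ⟨W, hW⟩ := hne
  exact ⟨W, hW, 0, 0, by simp⟩

theorem factorsThru_neg {X Y : C} {f : X ⟶ Y} (h : FactorsThru I f) :
    FactorsThru I (-f) := by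
  obtain ⟨W, hW, p, q, rfl⟩ := h
  exact ⟨W, hW, -p, q, by simp⟩

theorem factorsThru_add (hbi : ∀ ⦃W W' : C⦄, W ∈ I → W' ∈ I → (W ⊞ W') ∈ I)
    {X Y : C} {f g : X ⟶ Y} (hf : FactorsThru I f) (hg : FactorsThru I g) :
    FactorsThru I (f + g) := by
  obtain ⟨W, hW, p, q, rfl⟩ := hf
  obtain ⟨W', hW', p', q', rfl⟩ := hg
  exact ⟨W ⊞ W', hbi hW hW', biprod.lift p p', biprod.desc q q', by simp⟩

theorem factorsThru_comp_left {X' X Y : C} (f : X' ⟶ X) {g : X ⟶ Y}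
    (hg : FactorsThru I g) : FactorsThru I (f ≫ g) := by
  obtain ⟨W, hW, p, q, rfl⟩ := hg
  exact ⟨W, hW, f ≫ p, q, by simp⟩

theorem factorsThru_comp_right {X Y Y' : C} {f : X ⟶ Y} (g : Y ⟶ Y')
    (hf : FactorsThru I f) : FactorsThru I (f ≫ g) := by
  obtain ⟨W, hW, p, q, rfl⟩ := hf
  exact ⟨W, hW, p, q ≫ g, by simp⟩

theorem idealRel_congruence (Z : Set C) (hne : I.Nonempty)
    (hbi : ∀ ⦃W W' : C⦄, W ∈ I → W' ∈ I → (W ⊞ W') ∈ I) :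
    Congruence (idealRel I Z) := by
  refine { equivalence := ?eqv, comp_left := ?cl, comp_right := ?cr }
  case eqv =>
    intro X Y
    constructor
    · intro f
      simpa [idealRel, sub_self] using factorsThru_zero hne X.obj Y.obj
    · intro f g h
      simpa [idealRel, neg_sub] using factorsThru_neg h
    · intro f g k hfg hgk
      have := factorsThru_add hbi hfg hgk
      simpa [idealRel, sub_add_sub_cancel] using this
  case cl =>
    intro X Y Z' f g g' h
    have := factorsThru_comp_left (I := I) f.hom h
    simpa [idealRel, Preadditive.comp_sub] using this
  case cr =>
    intro X Y Z' f f' g h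
    have := factorsThru_comp_right (I := I) g.hom h
    simpa [idealRel, Preadditive.sub_comp] using this

/-- The preadditive structure on the ideal quotient `Z/[I]`. -/
def quotPreadditive (Z : Set C) (hne : I.Nonempty)
    (hbi : ∀ ⦃W W' : C⦄, W ∈ I → W' ∈ I → (W ⊞ W') ∈ I) :
    Preadditive (IdealQuotient I Z) :=
  letI : Congruence (idealRel I Z) := idealRel_congruence Z hne hbi
  Quotient.preadditive (idealRel I Z) (by
    intro X Y f₁ f₂ g₁ g₂ h₁ h₂
    have := factorsThru_add hbi h₁ h₂
    change FactorsThru I ((f₁.hom + g₁.hom) - (f₂.hom + g₂.hom))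
    simpa [idealRel, add_sub_add_comm] using this)

/-- The inclusion functor `A/[I] ⥤ B/[I]` for `A ⊆ B`. -/
def idealInclusion (I A B : Set C) (hAB : A ⊆ B) :
    IdealQuotient I A ⥤ IdealQuotient I B :=
  CategoryTheory.Quotient.lift _
    (ObjectProperty.ιOfLE (fun _ hX => hAB hX) ⋙ CategoryTheory.Quotient.functor (idealRel I B))
    (fun _ _ _ _ h => CategoryTheory.Quotient.sound _ h)

end IdealQuotient

namespace ETStruct

variable (T : ETStruct C)

/-- A premutation triple `(S, Z, V)`: conditions (MT1) and (MT2), with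
`I = S ∩ Z = Z ∩ V` strongly functorially finite in `Z`. -/
structure IsPremutationTriple (Sc Zc Vc : Set C) : Prop where
  sumS : ClosedSummands C Sc
  sumZ : ClosedSummands C Zc
  sumV : ClosedSummands C Vc
  /-- (MT1): `S ∩ Z = Z ∩ V` -/
  inter_eq : Sc ∩ Zc = Zc ∩ Vc
  /-- (MT1): `I ⊆ Z` is strongly contravariantly finite -/
  strong_contra : T.StronglyContraFinite (Sc ∩ Zc) Zc
  /-- (MT1): `I ⊆ Z` is strongly covariantly finite -/
  strong_cov : T.StronglyCovFinite (Sc ∩ Zc) Zc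
  /-- (MT2)(i): `E^I(S, Z) = 0` -/
  mt2_i₁ : T.vanishUp (Sc ∩ Zc) Sc Zc
  /-- (MT2)(i): `E_I(S, Z⟨-1⟩) = 0` -/
  mt2_i₂ : T.vanishDown (Sc ∩ Zc) Sc (T.shiftMinus (Sc ∩ Zc) Zc)
  /-- (MT2)(ii): `E_I(Z, V) = 0` -/
  mt2_ii₁ : T.vanishDown (Sc ∩ Zc) Zc Vc
  /-- (MT2)(ii): `E^I(Z⟨1⟩, V) = 0` -/
  mt2_ii₂ : T.vanishUp (Sc ∩ Zc) (T.shiftPlus (Sc ∩ Zc) Zc) Vc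

/-- A mutation triple: a premutation triple which moreover satisfies (MT3). -/
structure IsMutationTriple (Sc Zc Vc : Set C) : Prop extends T.IsPremutationTriple Sc Zc Vc where
  /-- (MT3)(i): `Cone_{E^I}(Z, Z) ⊆ Ũ` -/
  mt3_i₁ : T.coneRel (fun _ _ δ => T.memUp (Sc ∩ Zc) δ) Zc Zc ⊆ T.Utilde (Sc ∩ Zc) Sc Zc
  /-- (MT3)(i): `CoCone_{E_I}(Z, Z) ⊆ T̃` -/
  mt3_i₂ : T.coconeRel (fun _ _ δ => T.memDown (Sc ∩ Zc) δ) Zc Zc ⊆ T.Ttilde (Sc ∩ Zc) Zc Vc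
  /-- (MT3)(ii): `S` is closed under `E^I`-extensions -/
  mt3_ii_S : T.extClosedUp (Sc ∩ Zc) Sc
  /-- (MT3)(ii): `Z` is closed under `E^I`-extensions -/
  mt3_ii_Zup : T.extClosedUp (Sc ∩ Zc) Zc
  /-- (MT3)(ii): `Z` is closed under `E_I`-extensions -/
  mt3_ii_Zdown : T.extClosedDown (Sc ∩ Zc) Zc
  /-- (MT3)(ii): `V` is closed under `E_I`-extensions -/
  mt3_ii_V : T.extClosedDown (Sc ∩ Zc) Vc

/-- A right mutation double `(S, Z)`: conditions (MT1), (RM2) and (RM3) (with `V := I`). -/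
structure IsRightMutationDouble (Sc Zc : Set C) : Prop where
  sumS : ClosedSummands C Sc
  sumZ : ClosedSummands C Zc
  strong_contra : T.StronglyContraFinite (Sc ∩ Zc) Zc
  strong_cov : T.StronglyCovFinite (Sc ∩ Zc) Zc
  /-- (RM2): `E^I(S, Z) = 0` -/
  rm2₁ : T.vanishUp (Sc ∩ Zc) Sc Zc
  /-- (RM2): `E_I(S, Z⟨-1⟩) = 0` -/
  rm2₂ : T.vanishDown (Sc ∩ Zc) Sc (T.shiftMinus (Sc ∩ Zc) Zc)
  /-- (RM3): `Cone_{E^I}(Z, Z) ⊆ Ũ` -/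
  rm3₁ : T.coneRel (fun _ _ δ => T.memUp (Sc ∩ Zc) δ) Zc Zc ⊆ T.Utilde (Sc ∩ Zc) Sc Zc
  /-- (RM3): `S` is closed under `E^I`-extensions -/
  rm3_S : T.extClosedUp (Sc ∩ Zc) Sc
  /-- (RM3): `Z` is closed under `E^I`-extensions -/
  rm3_Z : T.extClosedUp (Sc ∩ Zc) Zc

end ETStruct
section Statement9Aux

namespace ETStruct

variable (T : ETStruct C)

lemma pullc {Z'' Z' Z X : C} (a : Z'' ⟶ Z') (b : Z' ⟶ Z) (δ : T.ext Z X) :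
    T.pull (a ≫ b) δ = T.pull a (T.pull b δ) := by
  simp [ETStruct.pull, op_comp]

lemma pushc {X X' X'' Z : C} (a : X ⟶ X') (b : X' ⟶ X'') (δ : T.ext Z X) :
    T.push (a ≫ b) δ = T.push b (T.push a δ) := by
  simp [ETStruct.push]

lemma pull0 {Z' Z X : C} (a : Z' ⟶ Z) : T.pull a (0 : T.ext Z X) = 0 := by
  simp [ETStruct.pull]

lemma pulladd {Z' Z X : C} (a b : Z' ⟶ Z) (δ : T.ext Z X) :
    T.pull (a + b) δ = T.pull a δ + T.pull b δ := by
  haveI := T.additive_op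
  simp [ETStruct.pull, op_add, Functor.map_add, NatTrans.app_add]

lemma weak_cokernel {X Y Z W : C} {f : X ⟶ Y} {g : Y ⟶ Z} {δ : T.ext Z X}
    (hconf : T.conf f g δ) (z' : Y ⟶ W) (hz : f ≫ z' = 0) :
    ∃ c : Z ⟶ W, g ≫ c = z' := by
  obtain ⟨c, hc, -⟩ := T.et3 (0 : X ⟶ X) (z' ≫ biprod.inr) hconf (T.conf_zero X W)
    (by rw [← Category.assoc, hz, zero_comp, zero_comp])
  refine ⟨c, ?_⟩
  rw [hc, Category.assoc, biprod.inr_snd, Category.comp_id]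

lemma lift_exists {Sc Zc : Set C} (hvan : T.vanishUp (Sc ∩ Zc) Sc Zc)
    {U Z₀ S₀ : C} {h : U ⟶ Z₀} {g : Z₀ ⟶ S₀} {ρ : T.ext S₀ U}
    (hconf : T.conf h g ρ) (hρ : T.memUp (Sc ∩ Zc) ρ) (hS₀ : S₀ ∈ Sc)
    {Z' : C} (hZ' : Z' ∈ Zc) (u : U ⟶ Z') : ∃ z : Z₀ ⟶ Z', h ≫ z = u := by
  have hmem : T.memUp (Sc ∩ Zc) (T.push u ρ) := by
    intro W hW t
    rw [← T.pushc]
    exact hρ hW (u ≫ t)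
  exact (T.push_zero_iff hconf u).mp (hvan hS₀ hZ' _ hmem)

lemma factors_cancel {Sc Zc : Set C}
    (hsc : T.StronglyContraFinite (Sc ∩ Zc) Zc)
    (hvan₂ : T.vanishDown (Sc ∩ Zc) Sc (T.shiftMinus (Sc ∩ Zc) Zc))
    {U Z₀ S₀ : C} {h : U ⟶ Z₀} {g : Z₀ ⟶ S₀} {ρ : T.ext S₀ U}
    (hconf : T.conf h g ρ) (hρ : T.memUp (Sc ∩ Zc) ρ) (hS₀ : S₀ ∈ Sc)
    {Z' : C} (hZ' : Z' ∈ Zc) {z : Z₀ ⟶ Z'}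
    (hfac : FactorsThru (Sc ∩ Zc) (h ≫ z)) : FactorsThru (Sc ∩ Zc) z := by
  obtain ⟨W, hW, p, q, hpq⟩ := hfac
  obtain ⟨k, hk⟩ := (T.push_zero_iff hconf p).mp (hρ hW p)
  have hz2 : h ≫ (z - k ≫ q) = 0 := by
    rw [Preadditive.comp_sub, ← Category.assoc, hk, ← hpq, sub_self]
  obtain ⟨c, hc⟩ := T.weak_cokernel hconf _ hz2
  obtain ⟨W'', hW'', p', hap, K, i, δ, hconfδ⟩ := hsc hZ'
  have hδ : T.memDown (Sc ∩ Zc) δ := by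
    intro V hV t
    obtain ⟨s, hs⟩ := hap hV t
    exact (T.pull_zero_iff hconfδ t).mpr ⟨s, hs⟩
  have hK : K ∈ T.shiftMinus (Sc ∩ Zc) Zc := ⟨W'', Z', hW'', hZ', i, p', δ, hconfδ, hδ⟩
  have hc0 : T.pull c δ = 0 := by
    refine hvan₂ hS₀ hK _ ?_
    intro V hV t
    rw [← T.pullc]
    exact hδ hV (t ≫ c)
  have hz0 : T.pull z δ = 0 := by
    have hzeq : z = k ≫ q + g ≫ c := by rw [hc]; abel
    rw [hzeq, T.pulladd, T.pullc, T.pullc, hδ hW q, hc0, T.pull0, T.pull0, add_zero]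
  obtain ⟨w, hw⟩ := (T.pull_zero_iff hconfδ z).mp hz0
  exact ⟨W'', hW'', w, p', hw.symm⟩

end ETStruct

end Statement9Aux
section Statement9Constr

open ETStruct

/-- Chosen s^I-triangle data for an object of `Ũ`. -/
structure S9Data (T : ETStruct C) (Sc Zc : Set C) (X : C) where
  Z₀ : C
  S₀ : C
  hZ₀ : Z₀ ∈ Zc
  hS₀ : S₀ ∈ Sc
  h : X ⟶ Z₀
  g : Z₀ ⟶ S₀
  ρ : T.ext S₀ X
  hconf : T.conf h g ρ
  hρ : T.memUp (Sc ∩ Zc) ρ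

noncomputable def s9Data (T : ETStruct C) {Sc Zc : Set C} {X : C}
    (hX : X ∈ T.Utilde (Sc ∩ Zc) Sc Zc) : S9Data T Sc Zc X :=
  Classical.choice (by
    obtain ⟨A', B', h1, h2, f, g, δ, hc, hm⟩ := hX
    exact ⟨⟨A', B', h1, h2, f, g, δ, hc, hm⟩⟩)

variable {T : ETStruct C} {Sc Zc : Set C}

noncomputable def s9lift (hvan₁ : T.vanishUp (Sc ∩ Zc) Sc Zc) {X : C} (D : S9Data T Sc Zc X)
    {Z' : C} (hZ' : Z' ∈ Zc) (u : X ⟶ Z') : D.Z₀ ⟶ Z' :=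
  (T.lift_exists hvan₁ D.hconf D.hρ D.hS₀ hZ' u).choose

lemma s9lift_spec (hvan₁ : T.vanishUp (Sc ∩ Zc) Sc Zc) {X : C} (D : S9Data T Sc Zc X)
    {Z' : C} (hZ' : Z' ∈ Zc) (u : X ⟶ Z') : D.h ≫ s9lift hvan₁ D hZ' u = u :=
  (T.lift_exists hvan₁ D.hconf D.hρ D.hS₀ hZ' u).choose_spec

lemma s9cancel (hsc : T.StronglyContraFinite (Sc ∩ Zc) Zc)
    (hvan₂ : T.vanishDown (Sc ∩ Zc) Sc (T.shiftMinus (Sc ∩ Zc) Zc))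
    {X : C} (D : S9Data T Sc Zc X) {Z' : C} (hZ' : Z' ∈ Zc)
    {z z' : D.Z₀ ⟶ Z'} (hf : FactorsThru (Sc ∩ Zc) (D.h ≫ z - D.h ≫ z')) :
    FactorsThru (Sc ∩ Zc) (z - z') :=
  T.factors_cancel hsc hvan₂ D.hconf D.hρ D.hS₀ hZ' (by rwa [Preadditive.comp_sub])

/-- Underlying `C`-morphism of a full-subcategory morphism. -/
def uh {P : Set C} {X Y : ObjectProperty.FullSubcategory (· ∈ P)} (f : X ⟶ Y) : X.obj ⟶ Y.obj := f.hom

/-- Package a `C`-morphism as a full-subcategory morphism. -/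
def dh {P : Set C} {X Y : ObjectProperty.FullSubcategory (· ∈ P)} (f : X.obj ⟶ Y.obj) : X ⟶ Y := ObjectProperty.homMk f

lemma fsub_id {A : Set C} (X : ObjectProperty.FullSubcategory (· ∈ A)) :
    (𝟙 X : X ⟶ X).hom = 𝟙 X.obj := rfl

lemma fsub_comp {A : Set C} {X Y Z : ObjectProperty.FullSubcategory (· ∈ A)} (f : X ⟶ Y) (g : Y ⟶ Z) :
    (f ≫ g).hom = (uh f) ≫ (uh g) := rfl

lemma s9ccl {A : Set C} {X Y : ObjectProperty.FullSubcategory (· ∈ A)} {f g : X ⟶ Y}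
    (hfg : HomRel.CompClosure (idealRel (Sc ∩ Zc) A) f g) :
    FactorsThru (Sc ∩ Zc) ((uh f) - uh g) := by
  induction hfg with
  | intro _ _ a m₁ m₂ b hm =>
    show FactorsThru (Sc ∩ Zc)
      (a.hom ≫ m₁.hom ≫ b.hom - a.hom ≫ m₂.hom ≫ b.hom)
    have : a.hom ≫ m₁.hom ≫ b.hom - a.hom ≫ m₂.hom ≫ b.hom
        = a.hom ≫ ((m₁.hom - m₂.hom) ≫ b.hom) := by
      simp [Preadditive.comp_sub, Preadditive.sub_comp]
    rw [this]
    exact factorsThru_comp_left _ (factorsThru_comp_right _ hm)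

/-- The functor `Ũ ⥤ Z/[I]`, `X ↦ Z^X`. -/
noncomputable def s9F (hvan₁ : T.vanishUp (Sc ∩ Zc) Sc Zc)
    (hsc : T.StronglyContraFinite (Sc ∩ Zc) Zc)
    (hvan₂ : T.vanishDown (Sc ∩ Zc) Sc (T.shiftMinus (Sc ∩ Zc) Zc))
    (hne : (Sc ∩ Zc).Nonempty) : ObjectProperty.FullSubcategory (· ∈ T.Utilde (Sc ∩ Zc) Sc Zc) ⥤ IdealQuotient (Sc ∩ Zc) Zc where
  obj X := (CategoryTheory.Quotient.functor _).obj ⟨(s9Data T X.property).Z₀, (s9Data T X.property).hZ₀⟩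
  map {X Y} f := (CategoryTheory.Quotient.functor _).map
      (show (⟨(s9Data T X.property).Z₀, (s9Data T X.property).hZ₀⟩ : ObjectProperty.FullSubcategory (· ∈ Zc)) ⟶
          ⟨(s9Data T Y.property).Z₀, (s9Data T Y.property).hZ₀⟩ from
        ObjectProperty.homMk <| s9lift hvan₁ (s9Data T X.property) (s9Data T Y.property).hZ₀
          ((uh f) ≫ (s9Data T Y.property).h))
  map_id X := by
    refine CategoryTheory.Quotient.sound _ ?_
    show FactorsThru (Sc ∩ Zc)
      (s9lift hvan₁ (s9Data T X.property) (s9Data T X.property).hZ₀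
          (𝟙 X.obj ≫ (s9Data T X.property).h)
        - 𝟙 (s9Data T X.property).Z₀)
    refine s9cancel hsc hvan₂ (s9Data T X.property) (s9Data T X.property).hZ₀ ?_
    rw [s9lift_spec, Category.id_comp, Category.comp_id, sub_self]
    exact factorsThru_zero hne _ _
  map_comp {X Y Z} f g := by
    refine CategoryTheory.Quotient.sound _ ?_
    show FactorsThru (Sc ∩ Zc)
      (s9lift hvan₁ (s9Data T X.property) (s9Data T Z.property).hZ₀
          (((uh f) ≫ (uh g)) ≫ (s9Data T Z.property).h)
        - s9lift hvan₁ (s9Data T X.property) (s9Data T Y.property).hZ₀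
            ((uh f) ≫ (s9Data T Y.property).h)
          ≫ s9lift hvan₁ (s9Data T Y.property) (s9Data T Z.property).hZ₀
            ((uh g) ≫ (s9Data T Z.property).h))
    refine s9cancel hsc hvan₂ (s9Data T X.property) (s9Data T Z.property).hZ₀ ?_
    have key : (s9Data T X.property).h ≫
        (s9lift hvan₁ (s9Data T X.property) (s9Data T Y.property).hZ₀
            ((uh f) ≫ (s9Data T Y.property).h)
          ≫ s9lift hvan₁ (s9Data T Y.property) (s9Data T Z.property).hZ₀
            ((uh g) ≫ (s9Data T Z.property).h))
        = ((uh f) ≫ (uh g)) ≫ (s9Data T Z.property).h := by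
      rw [← Category.assoc, s9lift_spec, Category.assoc, s9lift_spec, ← Category.assoc]
    rw [s9lift_spec, key, sub_self]
    exact factorsThru_zero hne _ _

/-- The induced functor `σ : Ũ/[I] ⥤ Z/[I]`. -/
noncomputable def s9sigma (hvan₁ : T.vanishUp (Sc ∩ Zc) Sc Zc)
    (hsc : T.StronglyContraFinite (Sc ∩ Zc) Zc)
    (hvan₂ : T.vanishDown (Sc ∩ Zc) Sc (T.shiftMinus (Sc ∩ Zc) Zc))
    (hne : (Sc ∩ Zc).Nonempty) :
    IdealQuotient (Sc ∩ Zc) (T.Utilde (Sc ∩ Zc) Sc Zc) ⥤ IdealQuotient (Sc ∩ Zc) Zc :=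
  CategoryTheory.Quotient.lift _ (s9F hvan₁ hsc hvan₂ hne) (by
    intro X Y f₁ f₂ hr
    refine CategoryTheory.Quotient.sound _ ?_
    show FactorsThru (Sc ∩ Zc)
      (s9lift hvan₁ (s9Data T X.property) (s9Data T Y.property).hZ₀
          ((uh f₁) ≫ (s9Data T Y.property).h)
        - s9lift hvan₁ (s9Data T X.property) (s9Data T Y.property).hZ₀
          ((uh f₂) ≫ (s9Data T Y.property).h))
    refine s9cancel hsc hvan₂ (s9Data T X.property) (s9Data T Y.property).hZ₀ ?_
    rw [s9lift_spec, s9lift_spec, ← Preadditive.sub_comp]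
    exact factorsThru_comp_right _ hr)
set_option maxHeartbeats 1000000 in
/-- The adjunction `σ ⊣ incl`. -/
noncomputable def s9adj (hvan₁ : T.vanishUp (Sc ∩ Zc) Sc Zc)
    (hsc : T.StronglyContraFinite (Sc ∩ Zc) Zc)
    (hvan₂ : T.vanishDown (Sc ∩ Zc) Sc (T.shiftMinus (Sc ∩ Zc) Zc))
    (hne : (Sc ∩ Zc).Nonempty) (hsub : Zc ⊆ T.Utilde (Sc ∩ Zc) Sc Zc) :
    s9sigma hvan₁ hsc hvan₂ hne ⊣ idealInclusion (Sc ∩ Zc) Zc (T.Utilde (Sc ∩ Zc) Sc Zc) hsub :=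
  CategoryTheory.Adjunction.mkOfHomEquiv
    { homEquiv := fun A B =>
        { toFun := fun zq => Quot.liftOn zq
            (fun (z : (⟨(s9Data T A.as.property).Z₀, (s9Data T A.as.property).hZ₀⟩ :
                  ObjectProperty.FullSubcategory (· ∈ Zc)) ⟶ B.as) =>
              Quot.mk _ (dh (P := T.Utilde (Sc ∩ Zc) Sc Zc) (X := A.as)
                (Y := ⟨B.as.obj, hsub B.as.property⟩)
                ((s9Data T A.as.property).h ≫ uh (P := Zc) z)))
            (fun z z' hr => by
              refine Quot.sound (HomRel.CompClosure.of ?_)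
              dsimp only [idealRel, uh, dh, ObjectProperty.homMk_hom]
              erw [← Preadditive.comp_sub]
              exact factorsThru_comp_left _ (s9ccl hr))
          invFun := fun uq => Quot.liftOn uq
            (fun (u : A.as ⟶ (⟨B.as.obj, hsub B.as.property⟩ :
                  ObjectProperty.FullSubcategory (· ∈ T.Utilde (Sc ∩ Zc) Sc Zc))) =>
              Quot.mk _ (dh (P := Zc)
                (X := ⟨(s9Data T A.as.property).Z₀, (s9Data T A.as.property).hZ₀⟩) (Y := B.as)
                (s9lift hvan₁ (s9Data T A.as.property) B.as.property
                  (uh (P := T.Utilde (Sc ∩ Zc) Sc Zc) u))))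
            (fun u u' hr => by
              refine Quot.sound (HomRel.CompClosure.of ?_)
              dsimp only [idealRel, uh, dh, ObjectProperty.homMk_hom]
              refine s9cancel hsc hvan₂ (s9Data T A.as.property) B.as.property ?_
              rw [s9lift_spec, s9lift_spec]
              exact s9ccl hr)
          left_inv := by
            intro zq
            obtain ⟨z⟩ := zq
            refine Quot.sound (HomRel.CompClosure.of ?_)
            dsimp only [idealRel, uh, dh, ObjectProperty.homMk_hom]
            refine s9cancel hsc hvan₂ (s9Data T A.as.property) B.as.property ?_
            rw [s9lift_spec, sub_self]
            exact factorsThru_zero hne _ _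
          right_inv := by
            intro uq
            obtain ⟨u⟩ := uq
            refine Quot.sound (HomRel.CompClosure.of ?_)
            dsimp only [idealRel, uh, dh, ObjectProperty.homMk_hom]
            rw [s9lift_spec, sub_self]
            exact factorsThru_zero hne _ _ }
      homEquiv_naturality_left_symm := by
        intro A' A B f g
        obtain ⟨f₀⟩ := f
        obtain ⟨u⟩ := g
        refine Quot.sound (HomRel.CompClosure.of ?_)
        dsimp only [idealRel, uh, dh, ObjectProperty.homMk_hom, fsub_comp, ObjectProperty.ιOfLE,
          ObjectProperty.FullSubcategory.comp_hom]
        refine s9cancel hsc hvan₂ (s9Data T A'.as.property) B.as.property ?_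
        have key : (s9Data T A'.as.property).h ≫
            (s9lift hvan₁ (s9Data T A'.as.property) (s9Data T A.as.property).hZ₀
                (uh (P := T.Utilde (Sc ∩ Zc) Sc Zc) f₀ ≫ (s9Data T A.as.property).h)
              ≫ s9lift hvan₁ (s9Data T A.as.property) B.as.property
                (uh (P := T.Utilde (Sc ∩ Zc) Sc Zc) (Y := ⟨B.as.obj, hsub B.as.property⟩) u))
            = uh (P := T.Utilde (Sc ∩ Zc) Sc Zc) f₀ ≫ uh (P := T.Utilde (Sc ∩ Zc) Sc Zc) (Y := ⟨B.as.obj, hsub B.as.property⟩) u := by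
          rw [← Category.assoc, s9lift_spec, Category.assoc, s9lift_spec]
        dsimp only [uh] at key
        erw [s9lift_spec, key, sub_self]
        exact factorsThru_zero hne _ _
      homEquiv_naturality_right := by
        intro A B B' f k
        obtain ⟨z⟩ := f
        obtain ⟨k₀⟩ := k
        refine Quot.sound (HomRel.CompClosure.of ?_)
        dsimp only [idealRel, uh, dh, ObjectProperty.homMk_hom, fsub_comp, ObjectProperty.ιOfLE,
          ObjectProperty.FullSubcategory.comp_hom]
        convert factorsThru_zero hne _ _ using 1
        exact sub_eq_zero.mpr (Category.assoc _ _ _).symm }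

end Statement9Constr


open ETStruct in
/-- For a premutation triple `(S, Z, V)` and `U ∈ Ũ` with a chosen
s^I-triangle `U ⟶ Z^U ⟶ S' ⇢ U`, precomposition with `h : U ⟶ Z^U` induces a natural
isomorphism `Hom_{Z/[I]}(Z^U, Z') ≅ Hom_{Ũ/[I]}(U, Z')`; consequently `U ↦ Z^U` extends
to a functor `σ : Ũ/[I] ⥤ Z/[I]` left adjoint to the inclusion. -/
theorem statement9 (T : ETStruct C) (Sc Zc Vc : Set C)
    (hpm : T.IsPremutationTriple Sc Zc Vc)
    (hsub : Zc ⊆ T.Utilde (Sc ∩ Zc) Sc Zc)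
    (U ZU S' : C) (hU : U ∈ T.Utilde (Sc ∩ Zc) Sc Zc) (hZU : ZU ∈ Zc) (hS' : S' ∈ Sc)
    (h : U ⟶ ZU) (g : ZU ⟶ S') (ρ : T.ext S' U)
    (hconf : T.conf h g ρ) (hρ : T.memUp (Sc ∩ Zc) ρ) :
    -- precomposition with `h` is bijective on morphisms modulo `[I]`
    (∀ (Z' : C), Z' ∈ Zc →
      (∀ u : U ⟶ Z', ∃ z : ZU ⟶ Z', FactorsThru (Sc ∩ Zc) (u - h ≫ z)) ∧
      (∀ z : ZU ⟶ Z', FactorsThru (Sc ∩ Zc) (h ≫ z) → FactorsThru (Sc ∩ Zc) z)) ∧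
    -- there is a left adjoint `σ` to the inclusion `Z/[I] ⥤ Ũ/[I]` with `σ(U) = Z^U`
    (∃ σ : IdealQuotient (Sc ∩ Zc) (T.Utilde (Sc ∩ Zc) Sc Zc) ⥤ IdealQuotient (Sc ∩ Zc) Zc,
      Nonempty (σ ⊣ idealInclusion (Sc ∩ Zc) Zc (T.Utilde (Sc ∩ Zc) Sc Zc) hsub) ∧
      Nonempty (σ.obj ((CategoryTheory.Quotient.functor _).obj ⟨U, hU⟩) ≅
        (CategoryTheory.Quotient.functor _).obj ⟨ZU, hZU⟩)) := by
  classical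
  have hne : (Sc ∩ Zc).Nonempty := by
    obtain ⟨W, hW, -⟩ := hpm.strong_contra hZU
    exact ⟨W, hW⟩
  constructor
  · intro Z' hZ'
    constructor
    · intro u
      obtain ⟨z, hz⟩ := T.lift_exists hpm.mt2_i₁ hconf hρ hS' hZ' u
      exact ⟨z, by rw [hz, sub_self]; exact factorsThru_zero hne _ _⟩
    · intro z hz
      exact T.factors_cancel hpm.strong_contra hpm.mt2_i₂ hconf hρ hS' hZ' hz
  · refine ⟨s9sigma hpm.mt2_i₁ hpm.strong_contra hpm.mt2_i₂ hne,
      ⟨s9adj hpm.mt2_i₁ hpm.strong_contra hpm.mt2_i₂ hne hsub⟩, ⟨?_⟩⟩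
    have e₁ := T.lift_exists hpm.mt2_i₁ (s9Data T hU).hconf (s9Data T hU).hρ
      (s9Data T hU).hS₀ hZU h
    have e₂ := T.lift_exists hpm.mt2_i₁ hconf hρ hS' (s9Data T hU).hZ₀
      (s9Data T hU).h
    set z₁ := e₁.choose with hz₁def
    set z₂ := e₂.choose with hz₂def
    have hz₁ : (s9Data T hU).h ≫ z₁ = h := e₁.choose_spec
    have hz₂ : h ≫ z₂ = (s9Data T hU).h := e₂.choose_spec
    refine ⟨Quot.mk _ (dh (P := Zc) (X := ⟨(s9Data T hU).Z₀, (s9Data T hU).hZ₀⟩)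
        (Y := ⟨ZU, hZU⟩) z₁),
      Quot.mk _ (dh (P := Zc) (X := ⟨ZU, hZU⟩)
        (Y := ⟨(s9Data T hU).Z₀, (s9Data T hU).hZ₀⟩) z₂), ?_, ?_⟩
    · refine Quot.sound (HomRel.CompClosure.of ?_)
      dsimp only [idealRel, uh, dh, ObjectProperty.homMk_hom, fsub_comp, fsub_id]
      show FactorsThru (Sc ∩ Zc) (z₁ ≫ z₂ - 𝟙 (s9Data T hU).Z₀)
      refine T.factors_cancel hpm.strong_contra hpm.mt2_i₂ (s9Data T hU).hconf
        (s9Data T hU).hρ (s9Data T hU).hS₀ (s9Data T hU).hZ₀ (z := z₁ ≫ z₂ - 𝟙 (s9Data T hU).Z₀) ?_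
      rw [Preadditive.comp_sub, ← Category.assoc, hz₁, hz₂, Category.comp_id, sub_self]
      exact factorsThru_zero hne _ _
    · refine Quot.sound (HomRel.CompClosure.of ?_)
      dsimp only [idealRel, uh, dh, ObjectProperty.homMk_hom, fsub_comp, fsub_id]
      show FactorsThru (Sc ∩ Zc) (z₂ ≫ z₁ - 𝟙 ZU)
      refine T.factors_cancel hpm.strong_contra hpm.mt2_i₂ hconf hρ hS' hZU
        (z := z₂ ≫ z₁ - 𝟙 ZU) ?_
      rw [Preadditive.comp_sub, ← Category.assoc, hz₂, hz₁, Category.comp_id, sub_self]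
      exact factorsThru_zero hne _ _
end

section
/- Let C be a triangulated category and ((S,T),(U,V)) a concentric twin cotorsion pair with I = S ∩ T and core Z = T ∩ U. For an s-triangle (distinguished triangle) A →^x B →^y C → A[1] with A, B ∈ Z: the cone C lies in U if and only if x is I-monic (every map A → I' with I' ∈ I factors through x). Dually, for a triangle A → B →^y C → A[1] with B, C ∈ Z: A ∈ T if and only if y is I-epic. -/
/-!
STATEMENT 17: For a concentric twin cotorsion pair `((S,T),(U,V))` in a triangulated
category with `I = S ∩ T` and core `Z = T ∩ U`: for a distinguished triangle
`A ⟶ B ⟶ C ⟶ A[1]` with `A, B ∈ Z`, the cone `C` lies in `U` iff `x` is `I`-monic;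
dually, for `B, C ∈ Z`, `A ∈ T` iff `y` is `I`-epic.
-/

open CategoryTheory CategoryTheory.Limits CategoryTheory.Pretriangulated

universe v u

namespace Stmt17

variable {C : Type u} [Category.{v} C] [Preadditive C] [HasZeroObject C] [HasShift C ℤ]
  [∀ n : ℤ, (shiftFunctor C n).Additive] [Pretriangulated C]

def ClosedSummands (D : Set C) : Prop :=
  ∀ ⦃X Y : C⦄, X ∈ D → ∀ (i : Y ⟶ X) (p : X ⟶ Y), i ≫ p = 𝟙 Y → Y ∈ D

/-- `(U, V)` is a cotorsion pair. -/
def CotorsionPair (U V : Set C) : Prop :=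
  ClosedSummands U ∧ ClosedSummands V ∧
  (∀ ⦃u v : C⦄, u ∈ U → v ∈ V → ∀ f : u ⟶ v⟦(1 : ℤ)⟧, f = 0) ∧
  (∀ X : C, ∃ v ∈ V, ∃ u ∈ U, ∃ (a : v ⟶ u) (b : u ⟶ X) (c : X ⟶ v⟦(1 : ℤ)⟧),
      Triangle.mk a b c ∈ distTriang C) ∧
  (∀ X : C, ∃ v ∈ V, ∃ u ∈ U, ∃ (a : X ⟶ v) (b : v ⟶ u) (c : u ⟶ X⟦(1 : ℤ)⟧),
      Triangle.mk a b c ∈ distTriang C)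

/-- A concentric twin cotorsion pair. -/
def ConcentricTCP (S T U V : Set C) : Prop :=
  CotorsionPair S T ∧ CotorsionPair U V ∧ S ⊆ U ∧ S ∩ T = U ∩ V

/-- If every map `X ⟶ v⟦1⟧` with `v ∈ V` vanishes, then `X ∈ U`. -/
lemma memU {U V : Set C} (huv : CotorsionPair U V) {X : C}
    (hX : ∀ v ∈ V, ∀ f : X ⟶ v⟦(1 : ℤ)⟧, f = 0) : X ∈ U := by
  obtain ⟨v, hv, u, hu, a, b, c, hT⟩ := huv.2.2.2.1 X
  obtain ⟨g, hg⟩ := Triangle.coyoneda_exact₃ _ hT (𝟙 X)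
    (by change 𝟙 X ≫ c = 0; rw [hX v hv c]; exact comp_zero)
  exact huv.1 hu g b hg.symm

/-- If every map `s ⟶ X⟦1⟧` with `s ∈ S` vanishes, then `X ∈ T`. -/
lemma memT {S T : Set C} (hst : CotorsionPair S T) {X : C}
    (hX : ∀ s ∈ S, ∀ f : s ⟶ X⟦(1 : ℤ)⟧, f = 0) : X ∈ T := by
  obtain ⟨t, ht, s, hs, a, b, c, hT⟩ := hst.2.2.2.2 X
  obtain ⟨g, hg⟩ := Triangle.yoneda_exact₂ _ (inv_rot_of_distTriang _ hT) (𝟙 X)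
    (by change (-(c⟦(-1 : ℤ)⟧') ≫ (shiftFunctorCompIsoId C (1 : ℤ) (-1) (by omega)).hom.app X) ≫ 𝟙 X = 0; rw [hX s hs c]; simp)
  exact hst.2.1 ht a g hg.symm

/-- `U` is closed under extensions. -/
lemma extU {U V : Set C} (huv : CotorsionPair U V) {X E Y : C}
    (hX : X ∈ U) (hY : Y ∈ U) (a : X ⟶ E) (b : E ⟶ Y) (c : Y ⟶ X⟦(1 : ℤ)⟧)
    (hT : Triangle.mk a b c ∈ distTriang C) : E ∈ U :=
  memU huv fun v hv f => by
    obtain ⟨g, hg⟩ := Triangle.yoneda_exact₂ _ hT f (huv.2.2.1 hX hv _)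
    rw [hg, huv.2.2.1 hY hv g]; exact comp_zero

/-- `T` is closed under extensions. -/
lemma extT {S T : Set C} (hst : CotorsionPair S T) {X E Y : C}
    (hX : X ∈ T) (hY : Y ∈ T) (a : X ⟶ E) (b : E ⟶ Y) (c : Y ⟶ X⟦(1 : ℤ)⟧)
    (hT : Triangle.mk a b c ∈ distTriang C) : E ∈ T :=
  memT hst fun s hs f => by
    obtain ⟨g, hg⟩ := Triangle.coyoneda_exact₁ _ (rot_of_distTriang _ hT) f
      (by exact hst.2.2.1 hs hY _)
    rw [hg, hst.2.2.1 hs hX g]; exact zero_comp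

/-- A map out of the first object of a triangle factors through `mor₁` provided the
composite with the (shifted) connecting map vanishes. -/
lemma fac₁ {A B Cc W : C} (x : A ⟶ B) (y : B ⟶ Cc) (z : Cc ⟶ A⟦(1 : ℤ)⟧)
    (hT : Triangle.mk x y z ∈ distTriang C) (f : A ⟶ W)
    (hf : z ≫ f⟦(1 : ℤ)⟧' = 0) : ∃ g : B ⟶ W, x ≫ g = f := by
  obtain ⟨g', hg'⟩ := Triangle.yoneda_exact₂ _
    (rot_of_distTriang _ (rot_of_distTriang _ hT)) (f⟦(1 : ℤ)⟧') (by exact hf)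
  obtain ⟨g, hg⟩ := (shiftFunctor C (1 : ℤ)).map_surjective g'
  refine ⟨-g, (shiftFunctor C (1 : ℤ)).map_injective ?_⟩
  change f⟦(1 : ℤ)⟧' = (-x⟦(1 : ℤ)⟧') ≫ g' at hg'
  change B ⟶ W at g
  change B⟦(1 : ℤ)⟧ ⟶ W⟦(1 : ℤ)⟧ at g'
  change (shiftFunctor C (1 : ℤ)).map g = g' at hg
  change (shiftFunctor C (1 : ℤ)).map (x ≫ (-g)) = (shiftFunctor C (1 : ℤ)).map f
  rw [Functor.map_comp, Functor.map_neg, hg, hg']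
  simp

theorem statement17 (S T U V : Set C) (h : ConcentricTCP S T U V) :
    -- the `U`-conic characterization
    (∀ (A B Cc : C), A ∈ T ∩ U → B ∈ T ∩ U →
      ∀ (x : A ⟶ B) (y : B ⟶ Cc) (z : Cc ⟶ A⟦(1 : ℤ)⟧),
        (Triangle.mk x y z ∈ distTriang C) →
        (Cc ∈ U ↔ ∀ ⦃W : C⦄, W ∈ S ∩ T → ∀ f : A ⟶ W, ∃ g : B ⟶ W, x ≫ g = f)) ∧
    -- the `T`-coconic characterization
    (∀ (A B Cc : C), B ∈ T ∩ U → Cc ∈ T ∩ U →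
      ∀ (x : A ⟶ B) (y : B ⟶ Cc) (z : Cc ⟶ A⟦(1 : ℤ)⟧),
        (Triangle.mk x y z ∈ distTriang C) →
        (A ∈ T ↔ ∀ ⦃W : C⦄, W ∈ S ∩ T → ∀ f : W ⟶ Cc, ∃ g : W ⟶ B, g ≫ y = f)) := by
  obtain ⟨hst, huv, hSU, hI⟩ := h
  constructor
  · intro A B Cc hA hB x y z hT
    constructor
    · intro hC W hW f
      have hWV : W ∈ V := (hI ▸ hW).2
      exact fac₁ x y z hT f (huv.2.2.1 hC hWV _)
    · intro hx
      apply memU huv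
      intro v hv c
      have h1 : y ≫ c = 0 := huv.2.2.1 hB.2 hv _
      obtain ⟨hmap, hc⟩ := Triangle.yoneda_exact₃ _ hT c h1
      obtain ⟨e, rfl⟩ := (shiftFunctor C (1 : ℤ)).map_surjective hmap
      obtain ⟨v', hv', u', hu', a, b, cc, hT'⟩ := huv.2.2.2.2 A
      have hv'U : v' ∈ U := extU huv hA.2 hu' a b cc hT'
      have hv'I : v' ∈ S ∩ T := by rw [hI]; exact ⟨hv'U, hv'⟩
      obtain ⟨e', he'⟩ := fac₁ a b cc hT' e (huv.2.2.1 hu' hv _)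
      obtain ⟨g, hg⟩ := hx hv'I a
      have hz : z ≫ x⟦(1 : ℤ)⟧' = 0 := comp_distTriang_mor_zero₃₁ _ hT
      rw [hc, ← he', ← hg]
      change z ≫ ((x ≫ g) ≫ e')⟦(1 : ℤ)⟧' = 0
      rw [Functor.map_comp, Functor.map_comp, ← Category.assoc, ← Category.assoc, hz]; simp
  · intro A B Cc hB hC x y z hT
    constructor
    · intro hA W hW f
      obtain ⟨g, hg⟩ := Triangle.coyoneda_exact₃ _ hT f (hst.2.2.1 hW.1 hA _)
      exact ⟨g, hg.symm⟩
    · intro hy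
      apply memT hst
      intro s hs φ
      have h1 : φ ≫ x⟦(1 : ℤ)⟧' = 0 := hst.2.2.1 hs hB.1 _
      obtain ⟨ψ, hψ⟩ := Triangle.coyoneda_exact₁ _ hT φ h1
      obtain ⟨t₁, ht₁, s₁, hs₁, a, p, d, hT'⟩ := hst.2.2.2.1 Cc
      have hs₁T : s₁ ∈ T := extT hst ht₁ hC.1 a p d hT'
      obtain ⟨ξ, hξ⟩ := Triangle.coyoneda_exact₃ _ hT' ψ (hst.2.2.1 hs ht₁ _)
      obtain ⟨q, hq⟩ := hy ⟨hs₁, hs₁T⟩ p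
      have hyz : y ≫ z = 0 := comp_distTriang_mor_zero₂₃ _ hT
      rw [hψ, hξ, ← hq]
      have key : ∀ ξ' : s ⟶ s₁, (ξ' ≫ q ≫ y) ≫ z = 0 := fun ξ' => by
        rw [Category.assoc, Category.assoc, hyz]; simp
      exact key ξ

end Stmt17
end
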